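/- arXiv:1910.04447 — 3 statements merged into one kernel-verified Lean document; each statement's English description precedes it below -/
import Mathlib

section
/- Let H be a separable Hilbert space and let f^1, …, f^m be H-valued dyadic martingales with f^j_0 = 0 for each j. Then for every n ≥ 1 and every r ≥ 0, P((Σ_{j=1}^m ‖f^j_n‖²)^{1/2} ≥ r) ≤ 2·exp(−r² / (2·‖Σ_{j=1}^m S_{2,n}(f^j)²‖_{L^∞})). -/
open MeasureTheory
open scoped ENNReal NNReal


/-- The σ-algebra on `ℝ` generated by the dyadic intervals of length `2^{-n}`. -/
def dyadicAlgebra (n : ℕ) : MeasurableSpace ℝ :=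
  MeasurableSpace.generateFrom
    {s | ∃ k : ℤ, s = Set.Ico ((k : ℝ) / 2 ^ n) (((k : ℝ) + 1) / 2 ^ n)}

/-- The dyadic filtration on `ℝ`. -/
noncomputable def dyadicFiltration : Filtration ℕ (Real.measurableSpace) where
  seq := dyadicAlgebra
  mono' := monotone_nat_of_le_succ fun n => by
    refine MeasurableSpace.generateFrom_le ?_
    rintro s ⟨k, rfl⟩
    have hab : ((2 * k : ℤ) : ℝ) / 2 ^ (n + 1) ≤ ((2 * k + 1 : ℤ) : ℝ) / 2 ^ (n + 1) := by
      gcongr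
      push_cast; linarith
    have hbc : ((2 * k + 1 : ℤ) : ℝ) / 2 ^ (n + 1)
        ≤ (((2 * k + 1 : ℤ) : ℝ) + 1) / 2 ^ (n + 1) := by
      gcongr
      linarith
    have e1 : ((2 * k : ℤ) : ℝ) / 2 ^ (n + 1) = (k : ℝ) / 2 ^ n := by
      push_cast; field_simp; ring
    have e2 : (((2 * k + 1 : ℤ) : ℝ) + 1) / 2 ^ (n + 1) = ((k : ℝ) + 1) / 2 ^ n := by
      push_cast; field_simp; ring
    have e3 : ((2 * k : ℤ) : ℝ) + 1 = ((2 * k + 1 : ℤ) : ℝ) := by push_cast; ring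
    have key : Set.Ico ((k : ℝ) / 2 ^ n) (((k : ℝ) + 1) / 2 ^ n)
        = Set.Ico (((2 * k : ℤ) : ℝ) / 2 ^ (n + 1)) ((((2 * k : ℤ) : ℝ) + 1) / 2 ^ (n + 1))
        ∪ Set.Ico (((2 * k + 1 : ℤ) : ℝ) / 2 ^ (n + 1))
            ((((2 * k + 1 : ℤ) : ℝ) + 1) / 2 ^ (n + 1)) := by
      rw [e3, Set.Ico_union_Ico_eq_Ico hab hbc, e1, e2]
    rw [key]
    exact MeasurableSet.union
      (MeasurableSpace.measurableSet_generateFrom (by exact ⟨2 * k, rfl⟩))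
      (MeasurableSpace.measurableSet_generateFrom (by exact ⟨2 * k + 1, rfl⟩))
  le' := fun n => MeasurableSpace.generateFrom_le (by rintro s ⟨k, rfl⟩; exact measurableSet_Ico)


lemma aux_pair_pow_le {c u w : ℝ} (hc : 0 ≤ c) (hu0 : 0 ≤ u) (huw : u ≤ w) (k : ℕ) :
    (c + u) ^ k + (c - u) ^ k ≤ (c + w) ^ k + (c - w) ^ k := by
  rw [sub_eq_add_neg, sub_eq_add_neg, add_pow, add_pow, add_pow, add_pow,
    ← Finset.sum_add_distrib, ← Finset.sum_add_distrib]
  refine Finset.sum_le_sum fun i _ => ?_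
  have h : ∀ a : ℝ, c ^ i * a ^ (k - i) * (k.choose i : ℝ) +
      c ^ i * (-a) ^ (k - i) * (k.choose i : ℝ)
      = (a ^ (k - i) + (-a) ^ (k - i)) * (c ^ i * (k.choose i : ℝ)) := by
    intro a; ring
  rw [h, h]
  rcases Nat.even_or_odd (k - i) with he | ho
  · rw [he.neg_pow, he.neg_pow]
    have h1 : u ^ (k - i) ≤ w ^ (k - i) := pow_le_pow_left₀ hu0 huw _
    have h2 : (0:ℝ) ≤ c ^ i * (k.choose i : ℝ) :=
      mul_nonneg (pow_nonneg hc _) (Nat.cast_nonneg _)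
    nlinarith
  · rw [ho.neg_pow, ho.neg_pow]; simp

lemma aux_hasSum_cosh_sqrt (lam : ℝ) {s : ℝ} (hs : 0 ≤ s) :
    HasSum (fun m : ℕ => (lam ^ 2) ^ m * s ^ m / ((2 * m).factorial : ℝ))
      (Real.cosh (lam * Real.sqrt s)) := by
  have := Real.hasSum_cosh (lam * Real.sqrt s)
  convert this using 2 with m
  rw [pow_mul, mul_pow, Real.sq_sqrt hs, mul_pow]

lemma aux_cosh_sqrt_pair_le {lam c u w : ℝ} (hu : |u| ≤ w) (hw : w ≤ c) :
    Real.cosh (lam * Real.sqrt (c + u)) + Real.cosh (lam * Real.sqrt (c - u))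
      ≤ Real.cosh (lam * Real.sqrt (c + w)) + Real.cosh (lam * Real.sqrt (c - w)) := by
  have hu0 : 0 ≤ |u| := abs_nonneg u
  have hc : 0 ≤ c := le_trans (le_trans hu0 hu) hw
  have h1 : 0 ≤ c + u := by rcases abs_le.1 (hu.trans hw) with ⟨h, _⟩; linarith
  have h2 : 0 ≤ c - u := by rcases abs_le.1 (hu.trans hw) with ⟨_, h⟩; linarith
  have h3 : 0 ≤ c + w := by linarith [le_trans hu0 hu]
  have h4 : 0 ≤ c - w := by linarith
  have habs : Real.cosh (lam * Real.sqrt (c + u)) + Real.cosh (lam * Real.sqrt (c - u))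
      = Real.cosh (lam * Real.sqrt (c + |u|)) + Real.cosh (lam * Real.sqrt (c - |u|)) := by
    rcases abs_cases u with ⟨h, _⟩ | ⟨h, _⟩ <;> rw [h] <;> ring_nf
  rw [habs]
  refine hasSum_le (fun m => ?_)
    ((aux_hasSum_cosh_sqrt lam (by linarith : (0:ℝ) ≤ c + |u|)).add
      (aux_hasSum_cosh_sqrt lam (by linarith [le_trans hu0 hu] : (0:ℝ) ≤ c - |u|)))
    ((aux_hasSum_cosh_sqrt lam h3).add (aux_hasSum_cosh_sqrt lam h4))
  have hcoef : (0:ℝ) ≤ (lam ^ 2) ^ m / ((2 * m).factorial : ℝ) :=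
    div_nonneg (pow_nonneg (sq_nonneg lam) m) (by positivity)
  have := aux_pair_pow_le hc hu0 hu m
  calc (lam ^ 2) ^ m * (c + |u|) ^ m / ((2 * m).factorial : ℝ) + (lam ^ 2) ^ m * (c - |u|) ^ m / ((2 * m).factorial : ℝ)
      = ((c + |u|) ^ m + (c - |u|) ^ m) * ((lam ^ 2) ^ m / ((2 * m).factorial : ℝ)) := by ring
    _ ≤ ((c + w) ^ m + (c - w) ^ m) * ((lam ^ 2) ^ m / ((2 * m).factorial : ℝ)) :=
        mul_le_mul_of_nonneg_right this hcoef
    _ = (lam ^ 2) ^ m * (c + w) ^ m / ((2 * m).factorial : ℝ) + (lam ^ 2) ^ m * (c - w) ^ m / ((2 * m).factorial : ℝ) := by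
        ring

lemma aux_cosh_pair {E : Type*} [NormedAddCommGroup E] [InnerProductSpace ℝ E]
    (lam : ℝ) (x v : E) :
    Real.cosh (lam * ‖x + v‖) + Real.cosh (lam * ‖x - v‖)
      ≤ 2 * Real.cosh (lam * ‖x‖) * Real.exp (lam ^ 2 * ‖v‖ ^ 2 / 2) := by
  set a := ‖x‖ with ha
  set b := ‖v‖ with hb
  have ha0 : 0 ≤ a := norm_nonneg x
  have hb0 : 0 ≤ b := norm_nonneg v
  have hnadd : ‖x + v‖ = Real.sqrt ((a ^ 2 + b ^ 2) + 2 * inner ℝ x v) := by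
    rw [← Real.sqrt_sq (norm_nonneg (x + v))]
    congr 1
    rw [norm_add_sq_real]; ring
  have hnsub : ‖x - v‖ = Real.sqrt ((a ^ 2 + b ^ 2) - 2 * inner ℝ x v) := by
    rw [← Real.sqrt_sq (norm_nonneg (x - v))]
    congr 1
    rw [norm_sub_sq_real]; ring
  have hcs : |2 * (inner ℝ x v : ℝ)| ≤ 2 * (a * b) := by
    rw [abs_mul, abs_two]
    have := abs_real_inner_le_norm x v
    linarith
  have hwc : 2 * (a * b) ≤ a ^ 2 + b ^ 2 := by nlinarith [sq_nonneg (a - b)]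
  have key := aux_cosh_sqrt_pair_le (lam := lam) hcs hwc
  rw [hnadd, hnsub]
  have e1 : (a ^ 2 + b ^ 2) + 2 * (a * b) = (a + b) ^ 2 := by ring
  have e2 : (a ^ 2 + b ^ 2) - 2 * (a * b) = (a - b) ^ 2 := by ring
  rw [e1, e2, Real.sqrt_sq (by linarith), Real.sqrt_sq_eq_abs] at key
  have e3 : Real.cosh (lam * |a - b|) = Real.cosh (lam * (a - b)) := by
    rcases abs_cases (a - b) with ⟨h, _⟩ | ⟨h, _⟩ <;> rw [h]
    rw [show lam * -(a - b) = -(lam * (a - b)) by ring, Real.cosh_neg]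
  rw [e3] at key
  have e4 : Real.cosh (lam * (a + b)) + Real.cosh (lam * (a - b))
      = 2 * Real.cosh (lam * a) * Real.cosh (lam * b) := by
    rw [show lam * (a + b) = lam * a + lam * b by ring,
      show lam * (a - b) = lam * a - lam * b by ring, Real.cosh_add, Real.cosh_sub]
    ring
  rw [e4] at key
  refine key.trans ?_
  have hce : Real.cosh (lam * b) ≤ Real.exp (lam ^ 2 * b ^ 2 / 2) := by
    have := Real.cosh_le_exp_half_sq (lam * b)
    rwa [show (lam * b) ^ 2 / 2 = lam ^ 2 * b ^ 2 / 2 by ring] at this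
  have hpos : 0 ≤ 2 * Real.cosh (lam * a) := by positivity
  nlinarith [Real.cosh_pos (lam * a), Real.exp_pos (lam ^ 2 * b ^ 2 / 2)]

lemma aux_sum_range_two_mul {M : Type*} [AddCommMonoid M] (f : ℕ → M) (m : ℕ) :
    ∑ k ∈ Finset.range (2 * m), f k = ∑ j ∈ Finset.range m, (f (2 * j) + f (2 * j + 1)) := by
  induction m with
  | zero => simp
  | succ m ih =>
    have h : 2 * (m + 1) = (2 * m) + 1 + 1 := by ring
    rw [h, Finset.sum_range_succ, Finset.sum_range_succ, ih, Finset.sum_range_succ, add_assoc]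

lemma aux_div_pred (j b s : ℕ) (hb : b < 2) : (2 * j + b) / 2 ^ (s + 1) = j / 2 ^ s := by
  have h1 : (2 * j + b) / 2 = j := by omega
  rw [pow_succ, mul_comm (2 ^ s) 2, ← Nat.div_div_eq_div_mul, h1]

lemma aux_tree_bound {E : Type*} [NormedAddCommGroup E] [InnerProductSpace ℝ E]
    (lam : ℝ) (x : ℕ → ℕ → E) :
    ∀ n : ℕ, (∀ l < n, ∀ k < 2 ^ l,
        x l k = (2:ℝ)⁻¹ • (x (l+1) (2*k) + x (l+1) (2*k+1))) →
    ∑ k ∈ Finset.range (2 ^ n),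
        Real.cosh (lam * ‖x n k‖) *
          Real.exp (-(lam ^ 2 / 2) * ∑ l ∈ Finset.range n,
            ‖x (l+1) (k / 2 ^ (n - (l+1))) - x l (k / 2 ^ (n - l))‖ ^ 2)
      ≤ 2 ^ n * Real.cosh (lam * ‖x 0 0‖) := by
  intro n
  induction n with
  | zero => simp
  | succ n ih =>
    intro hmid
    have h2 : 2 ^ (n+1) = 2 * 2 ^ n := by ring
    rw [h2, aux_sum_range_two_mul]
    have key : ∀ j ∈ Finset.range (2 ^ n),
        (Real.cosh (lam * ‖x (n+1) (2*j)‖) *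
          Real.exp (-(lam ^ 2 / 2) * ∑ l ∈ Finset.range (n+1),
            ‖x (l+1) ((2*j) / 2 ^ (n+1 - (l+1))) - x l ((2*j) / 2 ^ (n+1 - l))‖ ^ 2)
        + Real.cosh (lam * ‖x (n+1) (2*j+1)‖) *
          Real.exp (-(lam ^ 2 / 2) * ∑ l ∈ Finset.range (n+1),
            ‖x (l+1) ((2*j+1) / 2 ^ (n+1 - (l+1))) - x l ((2*j+1) / 2 ^ (n+1 - l))‖ ^ 2))
        ≤ 2 * (Real.cosh (lam * ‖x n j‖) *
            Real.exp (-(lam ^ 2 / 2) * ∑ l ∈ Finset.range n,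
              ‖x (l+1) (j / 2 ^ (n - (l+1))) - x l (j / 2 ^ (n - l))‖ ^ 2)) := by
      intro j hj
      rw [Finset.mem_range] at hj
      -- ancestor index identities
      have anc : ∀ b < 2, ∀ l ≤ n, (2*j+b) / 2 ^ (n+1-l) = j / 2 ^ (n-l) := by
        intro b hb l hl
        have h3 : n + 1 - l = (n - l) + 1 := by omega
        rw [h3, aux_div_pred j b (n-l) hb]
      -- the sums of squares
      have hQ : ∀ b < 2, (∑ l ∈ Finset.range (n+1),
          ‖x (l+1) ((2*j+b) / 2 ^ (n+1 - (l+1))) - x l ((2*j+b) / 2 ^ (n+1 - l))‖ ^ 2)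
          = (∑ l ∈ Finset.range n,
              ‖x (l+1) (j / 2 ^ (n - (l+1))) - x l (j / 2 ^ (n - l))‖ ^ 2)
            + ‖x (n+1) (2*j+b) - x n j‖ ^ 2 := by
        intro b hb
        rw [Finset.sum_range_succ]
        congr 1
        · refine Finset.sum_congr rfl fun l hl => ?_
          rw [Finset.mem_range] at hl
          have e1 : n + 1 - (l + 1) = n - l := by omega
          have e2 : n - l = (n - (l+1)) + 1 := by omega
          rw [e1, anc b hb l (by omega)]
          rw [e2, aux_div_pred j b _ hb]
        · have e1 : n + 1 - (n + 1) = 0 := by omega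
          have e2 : n + 1 - n = 1 := by omega
          rw [e1, e2, pow_zero, pow_one, Nat.div_one,
            show (2*j+b)/2 = j by omega]
      -- midpoint structure
      set v : E := x (n+1) (2*j) - x n j with hv
      have hA : x (n+1) (2*j) = x n j + v := by rw [hv]; abel
      have hmj := hmid n (Nat.lt_succ_self n) j hj
      have hsum : x (n+1) (2*j) + x (n+1) (2*j+1) = (2:ℝ) • x n j := by
        rw [hmj, smul_smul]
        norm_num
      have hB : x (n+1) (2*j+1) = x n j - v := by
        have : x (n+1) (2*j+1) = (2:ℝ) • x n j - x (n+1) (2*j) := by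
          rw [← hsum]; abel
        rw [this, hA, two_smul]; abel
      have hnv2 : ‖x (n+1) (2*j+1) - x n j‖ = ‖v‖ := by
        rw [hB]
        simpa using norm_neg v
      have hnv1 : ‖x (n+1) (2*j) - x n j‖ = ‖v‖ := rfl
      have hQ0 := hQ 0 (by norm_num)
      have hQ1 := hQ 1 (by norm_num)
      simp only [Nat.add_zero] at hQ0
      rw [hQ0, hQ1]
      rw [hnv1, hnv2, hA, hB]
      set Q := ∑ l ∈ Finset.range n,
        ‖x (l+1) (j / 2 ^ (n - (l+1))) - x l (j / 2 ^ (n - l))‖ ^ 2 with hQdef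
      have factored : ∀ z : E, Real.cosh (lam * ‖z‖) *
          Real.exp (-(lam ^2 / 2) * (Q + ‖v‖^2))
          = Real.cosh (lam * ‖z‖) * Real.exp (-(lam^2/2) * Q)
            * Real.exp (-(lam^2/2) * ‖v‖^2) := by
        intro z
        rw [mul_assoc, ← Real.exp_add]
        ring_nf
      rw [factored, factored]
      have hpair := aux_cosh_pair lam (x n j) v
      have hexp1 : (0:ℝ) < Real.exp (-(lam^2/2) * Q) := Real.exp_pos _
      have hexp2 : (0:ℝ) < Real.exp (-(lam^2/2) * ‖v‖^2) := Real.exp_pos _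
      have step : (Real.cosh (lam * ‖x n j + v‖) + Real.cosh (lam * ‖x n j - v‖))
          * (Real.exp (-(lam^2/2) * Q) * Real.exp (-(lam^2/2) * ‖v‖^2))
          ≤ (2 * Real.cosh (lam * ‖x n j‖) * Real.exp (lam ^ 2 * ‖v‖ ^ 2 / 2))
          * (Real.exp (-(lam^2/2) * Q) * Real.exp (-(lam^2/2) * ‖v‖^2)) := by
        exact mul_le_mul_of_nonneg_right hpair (by positivity)
      calc Real.cosh (lam * ‖x n j + v‖) * Real.exp (-(lam^2/2) * Q)
            * Real.exp (-(lam^2/2) * ‖v‖^2)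
          + Real.cosh (lam * ‖x n j - v‖) * Real.exp (-(lam^2/2) * Q)
            * Real.exp (-(lam^2/2) * ‖v‖^2)
          = (Real.cosh (lam * ‖x n j + v‖) + Real.cosh (lam * ‖x n j - v‖))
            * (Real.exp (-(lam^2/2) * Q) * Real.exp (-(lam^2/2) * ‖v‖^2)) := by ring
        _ ≤ (2 * Real.cosh (lam * ‖x n j‖) * Real.exp (lam ^ 2 * ‖v‖ ^ 2 / 2))
            * (Real.exp (-(lam^2/2) * Q) * Real.exp (-(lam^2/2) * ‖v‖^2)) := step
        _ = 2 * (Real.cosh (lam * ‖x n j‖) * Real.exp (-(lam^2/2) * Q))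
            * (Real.exp (lam ^ 2 * ‖v‖ ^ 2 / 2) * Real.exp (-(lam^2/2) * ‖v‖^2)) := by ring
        _ = 2 * (Real.cosh (lam * ‖x n j‖) * Real.exp (-(lam^2/2) * Q)) := by
            rw [← Real.exp_add]
            ring_nf
            rw [Real.exp_zero, mul_one]
    calc ∑ j ∈ Finset.range (2 ^ n), _ ≤
        ∑ j ∈ Finset.range (2 ^ n), 2 * (Real.cosh (lam * ‖x n j‖) *
            Real.exp (-(lam ^ 2 / 2) * ∑ l ∈ Finset.range n,
              ‖x (l+1) (j / 2 ^ (n - (l+1))) - x l (j / 2 ^ (n - l))‖ ^ 2)) :=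
          Finset.sum_le_sum key
      _ = 2 * ∑ j ∈ Finset.range (2 ^ n), (Real.cosh (lam * ‖x n j‖) *
            Real.exp (-(lam ^ 2 / 2) * ∑ l ∈ Finset.range n,
              ‖x (l+1) (j / 2 ^ (n - (l+1))) - x l (j / 2 ^ (n - l))‖ ^ 2)) := by
          rw [Finset.mul_sum]
      _ ≤ 2 * (2 ^ n * Real.cosh (lam * ‖x 0 0‖)) := by
          have := ih (fun l hl k hk => hmid l (by omega) k hk)
          linarith [this]
      _ = 2 ^ (n+1) * Real.cosh (lam * ‖x 0 0‖) := by ring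

lemma aux_interval_unique {l : ℕ} {k k' : ℤ} {x : ℝ}
    (hx : x ∈ Set.Ico ((k : ℝ) / 2 ^ l) (((k : ℝ) + 1) / 2 ^ l))
    (hx' : x ∈ Set.Ico ((k' : ℝ) / 2 ^ l) (((k' : ℝ) + 1) / 2 ^ l)) : k = k' := by
  have hp : (0:ℝ) < 2 ^ l := by positivity
  obtain ⟨h1, h2⟩ := hx
  obtain ⟨h3, h4⟩ := hx'
  rw [div_le_iff₀ hp] at h1 h3
  rw [lt_div_iff₀ hp] at h2 h4
  have e1 : k = ⌊x * 2 ^ l⌋ := by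
    rw [eq_comm, Int.floor_eq_iff]
    constructor
    · push_cast; linarith
    · push_cast; linarith
  have e2 : k' = ⌊x * 2 ^ l⌋ := by
    rw [eq_comm, Int.floor_eq_iff]
    constructor
    · push_cast; linarith
    · push_cast; linarith
  rw [e1, e2]

lemma aux_dyadic_saturated {l : ℕ} {S : Set ℝ} (hS : MeasurableSet[dyadicAlgebra l] S) :
    ∀ k : ℤ, ∀ x y : ℝ,
      x ∈ Set.Ico ((k : ℝ) / 2 ^ l) (((k : ℝ) + 1) / 2 ^ l) →
      y ∈ Set.Ico ((k : ℝ) / 2 ^ l) (((k : ℝ) + 1) / 2 ^ l) →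
      (x ∈ S ↔ y ∈ S) := by
  refine MeasurableSpace.generateFrom_induction
    {s | ∃ k : ℤ, s = Set.Ico ((k : ℝ) / 2 ^ l) (((k : ℝ) + 1) / 2 ^ l)}
    (fun s _ => ∀ k : ℤ, ∀ x y : ℝ,
      x ∈ Set.Ico ((k : ℝ) / 2 ^ l) (((k : ℝ) + 1) / 2 ^ l) →
      y ∈ Set.Ico ((k : ℝ) / 2 ^ l) (((k : ℝ) + 1) / 2 ^ l) →
      (x ∈ s ↔ y ∈ s)) ?_ ?_ ?_ ?_ S hS
  · rintro t ⟨k', rfl⟩ _ k x y hx hy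
    constructor
    · intro hxt
      have := aux_interval_unique hxt hx
      rwa [← this] at hy
    · intro hyt
      have := aux_interval_unique hyt hy
      rwa [← this] at hx
  · intro k x y _ _; simp
  · intro t _ h k x y hx hy
    simp only [Set.mem_compl_iff]
    rw [h k x y hx hy]
  · intro s _ h k x y hx hy
    simp only [Set.mem_iUnion]
    exact exists_congr fun n => h n k x y hx hy

lemma aux_dyadic_constant {H : Type*} [NormedAddCommGroup H]
    {l : ℕ} {g : ℝ → H} (hg : StronglyMeasurable[dyadicAlgebra l] g)
    {k : ℤ} {x y : ℝ}
    (hx : x ∈ Set.Ico ((k : ℝ) / 2 ^ l) (((k : ℝ) + 1) / 2 ^ l))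
    (hy : y ∈ Set.Ico ((k : ℝ) / 2 ^ l) (((k : ℝ) + 1) / 2 ^ l)) :
    g y = g x := by
  borelize H
  have hmg : Measurable[dyadicAlgebra l] g := hg.measurable
  have hS : MeasurableSet[dyadicAlgebra l] (g ⁻¹' {g x}) :=
    hmg (isClosed_singleton.measurableSet)
  have := (aux_dyadic_saturated hS k x y hx hy).mp rfl
  simpa using this
def dyI (l k : ℕ) : Set ℝ := Set.Ico ((k:ℝ)/2^l) (((k:ℝ)+1)/2^l)

lemma dyI_cast (l k : ℕ) :
    dyI l k = Set.Ico (((k:ℤ):ℝ) / 2 ^ l) ((((k:ℤ):ℝ) + 1) / 2 ^ l) := by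
  simp [dyI]

lemma dyI_measurableSet_dyadic (l k : ℕ) : MeasurableSet[dyadicAlgebra l] (dyI l k) :=
  MeasurableSpace.measurableSet_generateFrom ⟨(k:ℤ), by rw [dyI_cast]⟩

lemma dyI_mem_left (l k : ℕ) : ((k:ℝ)/2^l) ∈ dyI l k := by
  have hp : (0:ℝ) < 2 ^ l := by positivity
  refine ⟨le_rfl, ?_⟩
  rw [div_lt_div_iff₀ hp hp]
  nlinarith

lemma dyI_subset_Icc {l k : ℕ} (hk : k < 2^l) : dyI l k ⊆ Set.Icc (0:ℝ) 1 := by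
  intro x hx
  obtain ⟨h1, h2⟩ := hx
  have hp : (0:ℝ) < 2 ^ l := by positivity
  constructor
  · have : (0:ℝ) ≤ (k:ℝ)/2^l := by positivity
    linarith
  · have hk' : (k:ℝ) + 1 ≤ 2^l := by exact_mod_cast Nat.succ_le_of_lt hk
    have : ((k:ℝ)+1)/2^l ≤ 1 := by rw [div_le_one hp]; exact hk'
    linarith

lemma dyI_volume (l k : ℕ) : volume (dyI l k) = ENNReal.ofReal (((2:ℝ)^l)⁻¹) := by
  rw [dyI, Real.volume_Ico]
  congr 1
  field_simp
  ring

lemma dyI_union (l k : ℕ) : dyI l k = dyI (l+1) (2*k) ∪ dyI (l+1) (2*k+1) := by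
  have hp : (0:ℝ) < 2 ^ (l+1) := by positivity
  have e1 : ((2*k:ℕ):ℝ) / 2^(l+1) = (k:ℝ)/2^l := by
    push_cast; rw [pow_succ]; field_simp
  have e2 : (((2*k+1:ℕ):ℝ) + 1) / 2^(l+1) = ((k:ℝ)+1)/2^l := by
    push_cast; rw [pow_succ]; field_simp; ring
  have e3 : (((2*k:ℕ):ℝ) + 1) / 2^(l+1) = ((2*k+1:ℕ):ℝ) / 2^(l+1) := by push_cast; ring_nf
  have hab : ((2*k:ℕ):ℝ) / 2^(l+1) ≤ (((2*k:ℕ):ℝ)+1) / 2^(l+1) := by gcongr; linarith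
  have hbc : ((2*k+1:ℕ):ℝ) / 2^(l+1) ≤ (((2*k+1:ℕ):ℝ)+1) / 2^(l+1) := by gcongr; linarith
  rw [dyI, dyI, dyI, e3, Set.Ico_union_Ico_eq_Ico (e3 ▸ hab) hbc, e1, e2]

lemma dyI_disjoint (l k : ℕ) : Disjoint (dyI (l+1) (2*k)) (dyI (l+1) (2*k+1)) := by
  have e3 : (((2*k:ℕ):ℝ) + 1) / 2^(l+1) = ((2*k+1:ℕ):ℝ) / 2^(l+1) := by push_cast; ring_nf
  rw [dyI, dyI, e3, Set.disjoint_left]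
  rintro x ⟨_, h2⟩ ⟨h3, _⟩
  exact absurd h3 (not_le.mpr h2)

lemma dyI_anc {l n k : ℕ} (hl : l ≤ n) : dyI n k ⊆ dyI l (k / 2^(n-l)) := by
  intro x hx
  obtain ⟨h1, h2⟩ := hx
  have hpn : (0:ℝ) < 2 ^ n := by positivity
  have hpl : (0:ℝ) < 2 ^ l := by positivity
  set k' := k / 2^(n-l) with hk'
  have hsplit : (2:ℝ) ^ l * (2:ℝ) ^ (n - l) = (2:ℝ) ^ n := by
    rw [← pow_add]; congr 1; omega
  have hlow : k' * 2^(n-l) ≤ k := Nat.div_mul_le_self k _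
  have hhigh : k < (k' + 1) * 2^(n-l) := by
    have hdm := Nat.div_add_mod k (2^(n-l))
    have hm : k % 2^(n-l) < 2^(n-l) := Nat.mod_lt _ (by positivity)
    calc k = 2^(n-l) * k' + k % 2^(n-l) := hdm.symm
      _ < 2^(n-l) * k' + 2^(n-l) := by omega
      _ = (k'+1) * 2^(n-l) := by ring
  constructor
  · rw [div_le_iff₀ hpl]
    rw [div_le_iff₀ hpn] at h1
    have hcast : ((k':ℕ):ℝ) * 2^(n-l) ≤ (k:ℝ) := by exact_mod_cast hlow
    have : ((k':ℕ):ℝ) * 2^n = (((k':ℕ):ℝ) * 2^(n-l)) * 2^l := by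
      rw [← hsplit]; ring
    nlinarith
  · rw [lt_div_iff₀ hpl]
    rw [lt_div_iff₀ hpn] at h2
    have hcast : (k:ℝ) + 1 ≤ (((k':ℕ):ℝ) + 1) * 2^(n-l) := by exact_mod_cast hhigh
    have : (((k':ℕ):ℝ) + 1) * 2^n = ((((k':ℕ):ℝ) + 1) * 2^(n-l)) * 2^l := by
      rw [← hsplit]; ring
    nlinarith

lemma dyI_exists {n : ℕ} {ω : ℝ} (h0 : 0 ≤ ω) (h1 : ω < 1) :
    ⌊ω * 2^n⌋₊ < 2^n ∧ ω ∈ dyI n ⌊ω * 2^n⌋₊ := by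
  have hpn : (0:ℝ) < 2 ^ n := by positivity
  have hnn : 0 ≤ ω * 2^n := by positivity
  have hfl : (⌊ω * 2^n⌋₊ : ℝ) ≤ ω * 2^n := Nat.floor_le hnn
  have hfu : ω * 2^n < ⌊ω * 2^n⌋₊ + 1 := Nat.lt_floor_add_one _
  refine ⟨?_, ?_, ?_⟩
  · by_contra hc
    push_neg at hc
    have h2 : ((2:ℝ)^n : ℝ) ≤ (⌊ω * 2^n⌋₊:ℝ) := by exact_mod_cast hc
    nlinarith
  · rw [div_le_iff₀ hpn]; linarith
  · rw [lt_div_iff₀ hpn]; linarith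

lemma aux_finite_restrict : IsFiniteMeasure (volume.restrict (Set.Icc (0:ℝ) 1)) := by
  constructor
  rw [Measure.restrict_apply_univ, Real.volume_Icc]
  exact ENNReal.ofReal_lt_top

lemma aux_const_nat {H : Type*} [NormedAddCommGroup H] {l k : ℕ} {g : ℝ → H}
    (hg : StronglyMeasurable[dyadicAlgebra l] g) {ω : ℝ} (hω : ω ∈ dyI l k) :
    g ω = g ((k:ℝ)/2^l) := by
  have h1 : ω ∈ Set.Ico (((k:ℤ):ℝ) / 2 ^ l) ((((k:ℤ):ℝ) + 1) / 2 ^ l) := by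
    rwa [← dyI_cast]
  have h2 : ((k:ℝ)/2^l) ∈ Set.Ico (((k:ℤ):ℝ) / 2 ^ l) ((((k:ℤ):ℝ) + 1) / 2 ^ l) := by
    rw [← dyI_cast]; exact dyI_mem_left l k
  exact aux_dyadic_constant hg h2 h1

lemma aux_setIntegral_const {H : Type*} [NormedAddCommGroup H] [NormedSpace ℝ H] [CompleteSpace H]
    {m k : ℕ} (hk : k < 2^m) {g : ℝ → H}
    (hg : StronglyMeasurable[dyadicAlgebra m] g) :
    ∫ ω in dyI m k, g ω ∂(volume.restrict (Set.Icc (0:ℝ) 1))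
      = (((2:ℝ)^m)⁻¹) • g ((k:ℝ)/2^m) := by
  have hmeas : MeasurableSet (dyI m k) := measurableSet_Ico
  have hcongr : ∫ ω in dyI m k, g ω ∂(volume.restrict (Set.Icc (0:ℝ) 1))
      = ∫ _ω in dyI m k, g ((k:ℝ)/2^m) ∂(volume.restrict (Set.Icc (0:ℝ) 1)) :=
    setIntegral_congr_fun hmeas (fun ω hω => aux_const_nat hg hω)
  rw [hcongr, setIntegral_const]
  congr 1
  rw [measureReal_def, Measure.restrict_apply' measurableSet_Icc,
    Set.inter_eq_left.mpr (dyI_subset_Icc hk), dyI_volume,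
    ENNReal.toReal_ofReal (by positivity)]

lemma aux_midpoint {H : Type*} [NormedAddCommGroup H] [NormedSpace ℝ H] [CompleteSpace H]
    {g : ℕ → ℝ → H}
    (hg : Martingale g dyadicFiltration (volume.restrict (Set.Icc (0:ℝ) 1)))
    {l k : ℕ} (hk : k < 2^l) :
    g l ((k:ℝ)/2^l) = (2:ℝ)⁻¹ •
      (g (l+1) (((2*k : ℕ):ℝ)/2^(l+1)) + g (l+1) (((2*k+1 : ℕ):ℝ)/2^(l+1))) := by
  haveI := aux_finite_restrict
  have hk1 : 2*k < 2^(l+1) := by rw [pow_succ]; omega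
  have hk2 : 2*k+1 < 2^(l+1) := by rw [pow_succ]; omega
  have hIm : MeasurableSet[dyadicFiltration l] (dyI l k) := dyI_measurableSet_dyadic l k
  have hint := hg.setIntegral_eq (Nat.le_succ l) hIm
  have hL : ∫ ω in dyI l k, g l ω ∂(volume.restrict (Set.Icc (0:ℝ) 1))
      = (((2:ℝ)^l)⁻¹) • g l ((k:ℝ)/2^l) :=
    aux_setIntegral_const hk (hg.stronglyAdapted l)
  have hsplit : ∫ ω in dyI l k, g (l+1) ω ∂(volume.restrict (Set.Icc (0:ℝ) 1))
      = (((2:ℝ)^(l+1))⁻¹) • g (l+1) (((2*k:ℕ):ℝ)/2^(l+1))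
        + (((2:ℝ)^(l+1))⁻¹) • g (l+1) (((2*k+1:ℕ):ℝ)/2^(l+1)) := by
    rw [dyI_union l k,
      setIntegral_union (dyI_disjoint l k) (measurableSet_Ico : MeasurableSet (dyI (l+1) (2*k+1)))
        ((hg.integrable (l+1)).integrableOn) ((hg.integrable (l+1)).integrableOn),
      aux_setIntegral_const hk1 (hg.stronglyAdapted (l+1)),
      aux_setIntegral_const hk2 (hg.stronglyAdapted (l+1))]
  have heq : (((2:ℝ)^l)⁻¹) • g l ((k:ℝ)/2^l)
      = (((2:ℝ)^(l+1))⁻¹) • g (l+1) (((2*k:ℕ):ℝ)/2^(l+1))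
        + (((2:ℝ)^(l+1))⁻¹) • g (l+1) (((2*k+1:ℕ):ℝ)/2^(l+1)) := by
    rw [← hL, ← hsplit, hint]
  have := congrArg (fun z : H => ((2:ℝ)^l) • z) heq
  simp only [smul_add, smul_smul] at this
  have c1 : (2:ℝ)^l * ((2:ℝ)^l)⁻¹ = 1 := mul_inv_cancel₀ (by positivity)
  have c2 : (2:ℝ)^l * ((2:ℝ)^(l+1))⁻¹ = 2⁻¹ := by
    rw [pow_succ, mul_inv, ← mul_assoc, mul_inv_cancel₀ (by positivity), one_mul]
  rw [c1, c2, one_smul] at this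
  rw [this, smul_add]

set_option maxHeartbeats 2000000 in
theorem double_dyadic_concentration_hilbert
    {H : Type*} [NormedAddCommGroup H] [InnerProductSpace ℝ H] [CompleteSpace H]
    [TopologicalSpace.SeparableSpace H]
    (M : ℕ) (f : Fin M → ℕ → ℝ → H)
    (hf : ∀ j, Martingale (f j) dyadicFiltration (volume.restrict (Set.Icc (0 : ℝ) 1)))
    (hf0 : ∀ j, f j 0 = 0)
    (n : ℕ) (hn : 1 ≤ n) (r : ℝ) (hr : 0 ≤ r) :
    (volume.restrict (Set.Icc (0 : ℝ) 1))
        {ω | r ≤ Real.sqrt (∑ j, ‖f j n ω‖ ^ 2)}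
      ≤ ENNReal.ofReal (2 * Real.exp (-(r ^ 2) /
          (2 * (essSup
              (fun ω => ∑ j, ∑ l ∈ Finset.range n,
                ENNReal.ofReal (‖f j (l + 1) ω - f j l ω‖ ^ 2))
              (volume.restrict (Set.Icc (0 : ℝ) 1))).toReal))) := by
  classical
  set μ := volume.restrict (Set.Icc (0 : ℝ) 1) with hμdef
  haveI : IsFiniteMeasure μ := aux_finite_restrict
  set ES := essSup
      (fun ω => ∑ j, ∑ l ∈ Finset.range n,
        ENNReal.ofReal (‖f j (l + 1) ω - f j l ω‖ ^ 2)) μ with hESdef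
  have huniv : μ Set.univ ≤ ENNReal.ofReal 2 := by
    rw [hμdef, Measure.restrict_apply_univ, Real.volume_Icc]
    exact ENNReal.ofReal_le_ofReal (by norm_num)
  by_cases hV0 : ES.toReal = 0
  · rw [hV0, mul_zero, div_zero, Real.exp_zero, mul_one]
    exact (measure_mono (Set.subset_univ _)).trans huniv
  -- main case
  have hV : 0 < ES.toReal := lt_of_le_of_ne ENNReal.toReal_nonneg (Ne.symm hV0)
  set V := ES.toReal with hVdef
  have hEStop : ES ≠ ⊤ := by
    intro h
    rw [hVdef, h] at hV0
    exact hV0 ENNReal.toReal_top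
  have hESeq : ES = ENNReal.ofReal V := (ENNReal.ofReal_toReal hEStop).symm
  set x : ℕ → ℕ → PiLp 2 (fun _ : Fin M => H) :=
    fun l k => (WithLp.equiv 2 (∀ _ : Fin M, H)).symm
      (fun j => f j l ((k:ℝ)/2^l)) with hxdef
  have hxapp : ∀ l k j, x l k j = f j l ((k:ℝ)/2^l) := fun l k j => rfl
  have hxz : x 0 0 = 0 := by
    ext j
    rw [hxapp, hf0 j]
    rfl
  have hmid : ∀ l < n, ∀ k < 2^l,
      x l k = (2:ℝ)⁻¹ • (x (l+1) (2*k) + x (l+1) (2*k+1)) := by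
    intro l _ k hk
    ext j
    rw [hxapp, PiLp.smul_apply, PiLp.add_apply, hxapp, hxapp]
    exact_mod_cast aux_midpoint (hf j) hk
  have hnorm : ∀ l k, ‖x l k‖ = Real.sqrt (∑ j, ‖f j l ((k:ℝ)/2^l)‖ ^ 2) := by
    intro l k
    rw [PiLp.norm_eq_of_L2]
    simp only [hxapp]
  have hdiffsq : ∀ a p b q, ‖x a p - x b q‖ ^ 2
      = ∑ j, ‖f j a ((p:ℝ)/2^a) - f j b ((q:ℝ)/2^b)‖ ^ 2 := by
    intro a p b q
    rw [PiLp.norm_sq_eq_of_L2]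
    refine Finset.sum_congr rfl fun j _ => ?_
    rw [PiLp.sub_apply, hxapp, hxapp]
  -- the per-path quadratic variation
  set q : ℕ → ℝ := fun k => ∑ l ∈ Finset.range n,
    ‖x (l+1) (k / 2^(n-(l+1))) - x l (k / 2^(n-l))‖ ^ 2 with hqdef
  have hq0 : ∀ k, 0 ≤ q k := fun k => Finset.sum_nonneg fun l _ => sq_nonneg _
  have hqV : ∀ k < 2^n, q k ≤ V := by
    intro k hk
    have hpos : μ (dyI n k) ≠ 0 := by
      rw [hμdef, Measure.restrict_apply' measurableSet_Icc,
        Set.inter_eq_left.mpr (dyI_subset_Icc hk), dyI_volume]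
      simp only [ne_eq, ENNReal.ofReal_eq_zero, not_le]
      positivity
    have hae := ae_le_essSup (μ := μ)
      (f := fun ω => ∑ j, ∑ l ∈ Finset.range n,
        ENNReal.ofReal (‖f j (l + 1) ω - f j l ω‖ ^ 2))
    have hN : μ {ω | ¬ ((∑ j, ∑ l ∈ Finset.range n,
        ENNReal.ofReal (‖f j (l + 1) ω - f j l ω‖ ^ 2)) ≤ ES)} = 0 := by
      rw [← hESdef] at hae
      exact hae
    obtain ⟨ω, hωI, hωle⟩ : ∃ ω ∈ dyI n k,
        (∑ j, ∑ l ∈ Finset.range n,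
          ENNReal.ofReal (‖f j (l + 1) ω - f j l ω‖ ^ 2)) ≤ ES := by
      by_contra hcon
      push_neg at hcon
      refine hpos (measure_mono_null (fun ω hω => ?_) hN)
      exact fun hle => absurd hle (not_le.mpr (hcon ω hω))
    -- compute the value at ω
    have hval : (∑ j, ∑ l ∈ Finset.range n,
        ENNReal.ofReal (‖f j (l + 1) ω - f j l ω‖ ^ 2)) = ENNReal.ofReal (q k) := by
      rw [Finset.sum_comm]
      have hterm : ∀ l ∈ Finset.range n,
          (∑ j, ENNReal.ofReal (‖f j (l + 1) ω - f j l ω‖ ^ 2))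
          = ENNReal.ofReal (‖x (l+1) (k / 2^(n-(l+1))) - x l (k / 2^(n-l))‖ ^ 2) := by
        intro l hl
        rw [Finset.mem_range] at hl
        have hc1 : ∀ j, f j (l+1) ω = f j (l+1) ((((k / 2^(n-(l+1))):ℕ):ℝ)/2^(l+1)) :=
          fun j => aux_const_nat ((hf j).stronglyAdapted (l+1)) (dyI_anc (by omega) hωI)
        have hc2 : ∀ j, f j l ω = f j l ((((k / 2^(n-l)):ℕ):ℝ)/2^l) :=
          fun j => aux_const_nat ((hf j).stronglyAdapted l) (dyI_anc (by omega) hωI)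
        rw [hdiffsq, ← ENNReal.ofReal_sum_of_nonneg (fun j _ => sq_nonneg _)]
        congr 1
        exact Finset.sum_congr rfl fun j _ => by rw [hc1 j, hc2 j]
      rw [Finset.sum_congr rfl hterm, hqdef,
        ← ENNReal.ofReal_sum_of_nonneg (fun l _ => sq_nonneg _)]
    rw [hval, hESeq] at hωle
    exact (ENNReal.ofReal_le_ofReal_iff hV.le).mp hωle
  -- the tree bound
  set lam := r / V with hlamdef
  have hlam0 : 0 ≤ lam := div_nonneg hr hV.le
  have htree := aux_tree_bound lam x n hmid
  rw [hxz, norm_zero, mul_zero, Real.cosh_zero, mul_one] at htree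
  -- the bad set
  set B : Finset ℕ := (Finset.range (2^n)).filter
    (fun k : ℕ => r ≤ Real.sqrt (∑ j, ‖f j n ((k:ℝ)/2^n)‖ ^ 2)) with hBdef
  -- measure bound by bad intervals
  have hmeasA : μ {ω | r ≤ Real.sqrt (∑ j, ‖f j n ω‖ ^ 2)}
      ≤ (B.card : ℝ≥0∞) * ENNReal.ofReal (((2:ℝ)^n)⁻¹) := by
    rw [hμdef, Measure.restrict_apply' measurableSet_Icc]
    have hsubset : {ω | r ≤ Real.sqrt (∑ j, ‖f j n ω‖ ^ 2)} ∩ Set.Icc (0:ℝ) 1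
        ⊆ {(1:ℝ)} ∪ ⋃ k ∈ B, dyI n k := by
      rintro ω ⟨hωA, hω0, hω1⟩
      rcases eq_or_lt_of_le hω1 with h | h
      · left; simp [h]
      right
      obtain ⟨hklt, hkmem⟩ := dyI_exists hω0 h
      refine Set.mem_biUnion (Finset.mem_coe.mpr ?_) hkmem
      rw [hBdef, Finset.mem_filter, Finset.mem_range]
      refine ⟨hklt, ?_⟩
      have hc : ∀ j, f j n ω = f j n (( (⌊ω*2^n⌋₊ : ℕ):ℝ)/2^n) :=
        fun j => aux_const_nat ((hf j).stronglyAdapted n) hkmem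
      calc r ≤ Real.sqrt (∑ j, ‖f j n ω‖ ^ 2) := hωA
        _ = _ := by
            congr 1
            exact Finset.sum_congr rfl fun j _ => by rw [hc j]
    refine (measure_mono hsubset).trans ?_
    refine (measure_union_le _ _).trans ?_
    rw [Real.volume_singleton, zero_add]
    refine (measure_biUnion_finset_le B _).trans ?_
    rw [Finset.sum_congr rfl (fun k _ => dyI_volume n k), Finset.sum_const,
      nsmul_eq_mul]
  -- counting bound from the tree
  have hcount : (B.card : ℝ) * (Real.cosh (lam * r) * Real.exp (-(lam^2/2) * V))
      ≤ 2^n := by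
    have hterm : ∀ k ∈ B,
        Real.cosh (lam * r) * Real.exp (-(lam^2/2) * V)
        ≤ Real.cosh (lam * ‖x n k‖) * Real.exp (-(lam^2/2) * q k) := by
      intro k hk
      rw [hBdef, Finset.mem_filter, Finset.mem_range] at hk
      obtain ⟨hklt, hkr⟩ := hk
      have h1 : Real.cosh (lam * r) ≤ Real.cosh (lam * ‖x n k‖) := by
        rw [Real.cosh_le_cosh]
        have : r ≤ ‖x n k‖ := by rw [hnorm]; exact hkr
        rw [abs_of_nonneg (mul_nonneg hlam0 hr),
          abs_of_nonneg (mul_nonneg hlam0 (norm_nonneg _))]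
        exact mul_le_mul_of_nonneg_left this hlam0
      have h2 : Real.exp (-(lam^2/2) * V) ≤ Real.exp (-(lam^2/2) * q k) := by
        apply Real.exp_le_exp.mpr
        have := hqV k hklt
        nlinarith [sq_nonneg lam]
      have := mul_le_mul h1 h2 (Real.exp_pos _).le (Real.cosh_pos _).le
      exact this
    calc (B.card : ℝ) * (Real.cosh (lam * r) * Real.exp (-(lam^2/2) * V))
        = ∑ _k ∈ B, Real.cosh (lam * r) * Real.exp (-(lam^2/2) * V) := by
          rw [Finset.sum_const, nsmul_eq_mul]
      _ ≤ ∑ k ∈ B, Real.cosh (lam * ‖x n k‖) * Real.exp (-(lam^2/2) * q k) :=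
          Finset.sum_le_sum hterm
      _ ≤ ∑ k ∈ Finset.range (2^n),
            Real.cosh (lam * ‖x n k‖) * Real.exp (-(lam^2/2) * q k) := by
          refine Finset.sum_le_sum_of_subset_of_nonneg (Finset.filter_subset _ _) ?_
          intro k _ _
          positivity
      _ ≤ 2^n := htree
  -- final numeric computation
  have hch : Real.exp (lam * r) / 2 ≤ Real.cosh (lam * r) := by
    rw [Real.cosh_eq]
    have := (Real.exp_pos (-(lam * r))).le
    linarith
  have hexpeq : lam * r + (-(lam^2/2) * V) = r^2/(2*V) := by
    rw [hlamdef]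
    field_simp
    ring
  have hkey : Real.exp (r^2/(2*V)) / 2 ≤ Real.cosh (lam * r) * Real.exp (-(lam^2/2) * V) := by
    calc Real.exp (r^2/(2*V)) / 2
        = (Real.exp (lam * r) / 2) * Real.exp (-(lam^2/2) * V) := by
          rw [← hexpeq, Real.exp_add]; ring
      _ ≤ Real.cosh (lam * r) * Real.exp (-(lam^2/2) * V) :=
          mul_le_mul_of_nonneg_right hch (Real.exp_pos _).le
  have hcardbound : (B.card : ℝ) * ((2:ℝ)^n)⁻¹ ≤ 2 * Real.exp (-(r^2) / (2*V)) := by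
    have hp2 : (0:ℝ) < 2^n := by positivity
    have hB2 : (B.card : ℝ) * (Real.exp (r^2/(2*V)) / 2) ≤ 2^n := by
      calc (B.card : ℝ) * (Real.exp (r^2/(2*V)) / 2)
          ≤ (B.card : ℝ) * (Real.cosh (lam * r) * Real.exp (-(lam^2/2) * V)) :=
            mul_le_mul_of_nonneg_left hkey (Nat.cast_nonneg _)
        _ ≤ 2^n := hcount
    have hexppos : (0:ℝ) < Real.exp (r^2/(2*V)) := Real.exp_pos _
    have hEinv : Real.exp (-(r^2) / (2*V)) = (Real.exp (r^2/(2*V)))⁻¹ := by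
      rw [neg_div, Real.exp_neg]
    rw [hEinv, ← div_eq_mul_inv,
      show (2:ℝ) * (Real.exp (r^2/(2*V)))⁻¹ = 2 / Real.exp (r^2/(2*V)) from
        (div_eq_mul_inv 2 _).symm,
      div_le_div_iff₀ hp2 hexppos]
    nlinarith [hB2]
  calc μ {ω | r ≤ Real.sqrt (∑ j, ‖f j n ω‖ ^ 2)}
      ≤ (B.card : ℝ≥0∞) * ENNReal.ofReal (((2:ℝ)^n)⁻¹) := hmeasA
    _ = ENNReal.ofReal ((B.card : ℝ) * ((2:ℝ)^n)⁻¹) := by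
        rw [ENNReal.ofReal_mul (Nat.cast_nonneg _), ENNReal.ofReal_natCast]
    _ ≤ ENNReal.ofReal (2 * Real.exp (-(r^2) / (2*V))) :=
        ENNReal.ofReal_le_ofReal hcardbound
end

section
/- Let H be a separable Hilbert space and let f = (f_j)_{j≥0} be an H-valued conditionally symmetric martingale. Then for every β > 0, r > 0, b > 0 and α ≥ 0, P(there exists n ≥ 1 such that ‖f_n − f_0‖/(α + β·S_{2,n}(f)²) ≥ r and 1/S_{2,n}(f)² ≤ b) ≤ 4·exp(−r²·(β²/(2b) + αβ)). -/
open MeasureTheory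
open scoped ENNReal NNReal

/-- A martingale (given by its sequence `f`) is conditionally symmetric: for every `j ≥ 1`
and every bounded continuous `φ : X^j → ℝ`,
`E φ(d_1,…,d_{j−1},d_j) = E φ(d_1,…,d_{j−1},−d_j)`, where `d_k = f_k − f_{k−1}`. -/
def CondSymmetric {Ω : Type*} [MeasurableSpace Ω] (μ : Measure Ω)
    {X : Type*} [NormedAddCommGroup X] (f : ℕ → Ω → X) : Prop :=
  ∀ j : ℕ, ∀ φ : (Fin (j + 1) → X) → ℝ, Continuous φ → (∃ C, ∀ v, |φ v| ≤ C) →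
    (∫ ω, φ (fun i => f ((i : ℕ) + 1) ω - f (i : ℕ) ω) ∂μ) =
    (∫ ω, φ (fun i => if (i : ℕ) = j then -(f ((i : ℕ) + 1) ω - f (i : ℕ) ω)
        else f ((i : ℕ) + 1) ω - f (i : ℕ) ω) ∂μ)

lemma sinh_le_mul_cosh {t : ℝ} (ht : 0 ≤ t) : Real.sinh t ≤ t * Real.cosh t := by
  have h : ∀ s ∈ Set.Ici (0:ℝ), 0 ≤ deriv (fun u => u * Real.cosh u - Real.sinh u) s := by
    intro s hs
    have : deriv (fun u : ℝ => u * Real.cosh u - Real.sinh u) s = s * Real.sinh s := by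
      rw [deriv_fun_sub (by fun_prop) (Real.differentiable_sinh s)]
      rw [deriv_fun_mul (differentiable_fun_id s) (Real.differentiable_cosh s)]
      simp [Real.deriv_cosh, Real.deriv_sinh]
    rw [this]
    exact mul_nonneg hs (Real.sinh_nonneg_iff.2 hs)
  have hm : MonotoneOn (fun u : ℝ => u * Real.cosh u - Real.sinh u) (Set.Ici 0) := by
    apply monotoneOn_of_deriv_nonneg (convex_Ici 0) (by fun_prop) (by fun_prop)
    intro s hs
    exact h s (interior_subset hs)
  have := hm (Set.self_mem_Ici) (Set.mem_Ici.2 ht) ht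
  simp at this
  linarith

lemma cosh_mul_exp_anti :
    AntitoneOn (fun t : ℝ => Real.cosh t * Real.exp (-(t^2)/2)) (Set.Ici 0) := by
  apply antitoneOn_of_deriv_nonpos (convex_Ici 0) (by fun_prop)
  · fun_prop
  intro s hs
  rw [interior_Ici] at hs
  have hd : deriv (fun t : ℝ => Real.cosh t * Real.exp (-(t^2)/2)) s
      = (Real.sinh s - s * Real.cosh s) * Real.exp (-(s^2)/2) := by
    have h1 : HasDerivAt (fun t : ℝ => -(t^2)/2) (-s) s := by
      have := ((hasDerivAt_pow 2 s).neg).div_const 2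
      simpa using this.congr_deriv (by ring)
    have h2 : HasDerivAt (fun t : ℝ => Real.exp (-(t^2)/2)) (Real.exp (-(s^2)/2) * (-s)) s :=
      (Real.hasDerivAt_exp _).comp s h1
    have h3 : HasDerivAt (fun t : ℝ => Real.cosh t * Real.exp (-(t^2)/2))
        (Real.sinh s * Real.exp (-(s^2)/2) + Real.cosh s * (Real.exp (-(s^2)/2) * (-s))) s :=
      (Real.hasDerivAt_cosh s).mul h2
    rw [h3.deriv]; ring
  rw [hd]
  apply mul_nonpos_of_nonpos_of_nonneg _ (Real.exp_nonneg _)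
  have := sinh_le_mul_cosh (le_of_lt hs)
  linarith

lemma cosh_le_cosh_mul_exp {x u : ℝ} (hx : 0 ≤ x) (hxu : x ≤ u) :
    Real.cosh u ≤ Real.cosh x * Real.exp ((u^2 - x^2)/2) := by
  have h := cosh_mul_exp_anti (Set.mem_Ici.2 hx) (Set.mem_Ici.2 (hx.trans hxu)) hxu
  simp only at h
  have h2 := mul_le_mul_of_nonneg_right h (le_of_lt (Real.exp_pos ((u^2)/2)))
  rw [mul_assoc, mul_assoc, ← Real.exp_add, ← Real.exp_add] at h2
  have e1 : -u^2/2 + u^2/2 = 0 := by ring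
  have e2 : -x^2/2 + u^2/2 = (u^2 - x^2)/2 := by ring
  rw [e1, Real.exp_zero, mul_one, e2] at h2
  exact h2

lemma pinelis_pointwise {H : Type*} [NormedAddCommGroup H] [InnerProductSpace ℝ H] (g d : H) :
    Real.cosh ‖g + d‖ + Real.cosh ‖g - d‖ ≤ 2 * Real.cosh ‖g‖ * Real.exp (‖d‖^2/2) := by
  set a := ‖g + d‖ with ha
  set b := ‖g - d‖ with hb
  have ha0 : 0 ≤ a := norm_nonneg _
  have hb0 : 0 ≤ b := norm_nonneg _
  set u := (a + b)/2 with hu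
  set v := (a - b)/2 with hv
  have hcosh : Real.cosh a + Real.cosh b = 2 * (Real.cosh u * Real.cosh v) := by
    have e1 : a = u + v := by rw [hu, hv]; ring
    have e2 : b = u - v := by rw [hu, hv]; ring
    rw [e1, e2, Real.cosh_add, Real.cosh_sub]; ring
  have hpar : u^2 + v^2 = ‖g‖^2 + ‖d‖^2 := by
    have h1 : a^2 = ‖g‖^2 + 2 * inner ℝ g d + ‖d‖^2 := by
      rw [ha]; exact norm_add_sq_real g d
    have h2 : b^2 = ‖g‖^2 - 2 * inner ℝ g d + ‖d‖^2 := by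
      rw [hb]; exact norm_sub_sq_real g d
    rw [hu, hv]; nlinarith [h1, h2]
  have hvd : v^2 ≤ ‖d‖^2 := by
    have h3 : |a - b| ≤ ‖(g + d) - (g - d)‖ := abs_norm_sub_norm_le _ _
    have h4 : (g + d) - (g - d) = d + d := by abel
    have h5 : ‖d + d‖ ≤ 2 * ‖d‖ := by
      calc ‖d + d‖ ≤ ‖d‖ + ‖d‖ := norm_add_le _ _
        _ = 2 * ‖d‖ := by ring
    rw [h4] at h3
    have h6 : |a - b| ≤ 2 * ‖d‖ := h3.trans h5
    have := abs_nonneg (a - b)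
    rw [hv]
    nlinarith [sq_abs (a - b)]
  have hgu : ‖g‖ ≤ u := by
    have hu0 : 0 ≤ u := by rw [hu]; linarith
    nlinarith [norm_nonneg g]
  have hcu : Real.cosh u ≤ Real.cosh ‖g‖ * Real.exp ((u^2 - ‖g‖^2)/2) :=
    cosh_le_cosh_mul_exp (norm_nonneg g) hgu
  have hcv : Real.cosh v ≤ Real.exp (v^2/2) := Real.cosh_le_exp_half_sq v
  calc Real.cosh a + Real.cosh b = 2 * (Real.cosh u * Real.cosh v) := hcosh
    _ ≤ 2 * ((Real.cosh ‖g‖ * Real.exp ((u^2 - ‖g‖^2)/2)) * Real.exp (v^2/2)) := by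
        have c1 : (0:ℝ) < Real.cosh u := Real.cosh_pos _
        have c2 : (0:ℝ) < Real.cosh v := Real.cosh_pos _
        nlinarith [Real.exp_pos ((u^2 - ‖g‖^2)/2), Real.exp_pos (v^2/2), Real.cosh_pos ‖g‖]
    _ = 2 * Real.cosh ‖g‖ * Real.exp (‖d‖^2/2) := by
        rw [mul_assoc, ← Real.exp_add]
        have : (u^2 - ‖g‖^2)/2 + v^2/2 = ‖d‖^2/2 := by linarith
        rw [this]; ring

lemma key_step {Ω H : Type*} {m : MeasurableSpace Ω} {μ : Measure Ω} [IsProbabilityMeasure μ]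
    [NormedAddCommGroup H] [MeasurableSpace H] [BorelSpace H]
    [SecondCountableTopology H]
    (f : ℕ → Ω → H) (hmeas : ∀ n, Measurable (f n))
    (hsymm : CondSymmetric μ f) (N : ℕ)
    (Ψ : (Fin (N + 1) → H) → ℝ≥0∞) (hΨ : Measurable Ψ) :
    (∫⁻ ω, Ψ (fun i => f ((i : ℕ) + 1) ω - f (i : ℕ) ω) ∂μ) =
    (∫⁻ ω, Ψ (fun i => if (i : ℕ) = N then -(f ((i : ℕ) + 1) ω - f (i : ℕ) ω)
        else f ((i : ℕ) + 1) ω - f (i : ℕ) ω) ∂μ) := by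
  set D : Ω → (Fin (N + 1) → H) := fun ω i => f ((i : ℕ) + 1) ω - f (i : ℕ) ω with hD
  set D' : Ω → (Fin (N + 1) → H) := fun ω i =>
      if (i : ℕ) = N then -(f ((i : ℕ) + 1) ω - f (i : ℕ) ω)
      else f ((i : ℕ) + 1) ω - f (i : ℕ) ω with hD'
  have hDmeas : Measurable D :=
    measurable_pi_lambda _ fun i => ((hmeas _).sub (hmeas _))
  have hD'meas : Measurable D' := by
    apply measurable_pi_lambda
    intro i
    simp only [hD']
    rcases eq_or_ne (i : ℕ) N with h | h
    · simp only [if_pos h]; exact ((hmeas _).sub (hmeas _)).neg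
    · simp only [if_neg h]; exact (hmeas _).sub (hmeas _)
  have hprob : IsProbabilityMeasure (μ.map D) := Measure.isProbabilityMeasure_map hDmeas.aemeasurable
  have hprob' : IsProbabilityMeasure (μ.map D') := Measure.isProbabilityMeasure_map hD'meas.aemeasurable
  have hmapeq : μ.map D = μ.map D' := by
    apply ext_of_forall_lintegral_eq_of_IsFiniteMeasure
    intro fb
    obtain ⟨C, hC⟩ := fb.bounded
    set x₀ : Fin (N + 1) → H := fun _ => 0
    have hbound : ∀ v, |((fb v : ℝ))| ≤ (fb x₀ : ℝ) + C := by
      intro v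
      rw [abs_of_nonneg (fb v).coe_nonneg]
      have := hC v x₀
      rw [NNReal.dist_eq] at this
      have h2 := abs_sub_abs_le_abs_sub ((fb v : ℝ)) ((fb x₀ : ℝ))
      rw [abs_of_nonneg (fb v).coe_nonneg, abs_of_nonneg (fb x₀).coe_nonneg] at h2
      linarith [le_abs_self ((fb v : ℝ) - (fb x₀ : ℝ))]
    have hcont : Continuous (fun v => ((fb v : ℝ))) := NNReal.continuous_coe.comp fb.continuous
    rw [lintegral_map (by fun_prop) hDmeas, lintegral_map (by fun_prop) hD'meas]
    have hbd : ∀ (T : Ω → (Fin (N + 1) → H)), Measurable T →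
        Integrable (fun ω => ((fb (T ω) : ℝ))) μ := by
      intro T hT
      apply (integrable_const ((fb x₀ : ℝ) + C)).mono'
      · exact (hcont.measurable.comp hT).aestronglyMeasurable
      · exact Filter.Eventually.of_forall fun ω => by
          rw [Real.norm_eq_abs]; exact hbound (T ω)
    rw [lintegral_coe_eq_integral _ (hbd D hDmeas), lintegral_coe_eq_integral _ (hbd D' hD'meas)]
    congr 1
    exact hsymm N (fun v => (fb v : ℝ)) hcont ⟨(fb x₀ : ℝ) + C, hbound⟩
  calc (∫⁻ ω, Ψ (D ω) ∂μ) = ∫⁻ x, Ψ x ∂(μ.map D) := (lintegral_map hΨ hDmeas).symm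
    _ = ∫⁻ x, Ψ x ∂(μ.map D') := by rw [hmapeq]
    _ = ∫⁻ ω, Ψ (D' ω) ∂μ := lintegral_map hΨ hD'meas

theorem de_la_pena_hilbert
    {Ω H : Type*} {m : MeasurableSpace Ω} {μ : Measure Ω} [IsProbabilityMeasure μ]
    [NormedAddCommGroup H] [InnerProductSpace ℝ H] [CompleteSpace H]
    [TopologicalSpace.SeparableSpace H]
    (ℱ : Filtration ℕ m) (hℱ0 : ℱ 0 = ⊥)
    (f : ℕ → Ω → H) (hf : Martingale f ℱ μ)
    (hsymm : CondSymmetric μ f)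
    (β r b α : ℝ) (hβ : 0 < β) (hr : 0 < r) (hb : 0 < b) (hα : 0 ≤ α) :
    μ {ω | ∃ n : ℕ, 1 ≤ n ∧
          0 < (∑ j ∈ Finset.range n, ‖f (j + 1) ω - f j ω‖ ^ 2) ∧
          r ≤ ‖f n ω - f 0 ω‖ /
              (α + β * ∑ j ∈ Finset.range n, ‖f (j + 1) ω - f j ω‖ ^ 2) ∧
          1 / (∑ j ∈ Finset.range n, ‖f (j + 1) ω - f j ω‖ ^ 2) ≤ b}
      ≤ ENNReal.ofReal (4 * Real.exp (-(r ^ 2) * (β ^ 2 / (2 * b) + α * β))) := by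
  classical
  borelize H
  haveI : SecondCountableTopology H := UniformSpace.secondCountable_of_separable H
  have hfm : ∀ n, Measurable (f n) := fun n =>
    ((hf.stronglyAdapted n).mono (ℱ.le n)).measurable
  set L : ℝ := r * β with hL
  have hLpos : 0 < L := mul_pos hr hβ
  set c : ℝ := r ^ 2 * (β ^ 2 / (2 * b) + α * β) with hc
  set t : ℝ := Real.exp c / 2 with ht
  have htpos : 0 < t := by positivity
  set S : ℕ → Ω → ℝ := fun n ω => ∑ j ∈ Finset.range n, ‖f (j + 1) ω - f j ω‖ ^ 2 with hS
  set Gr : ℕ → Ω → ℝ := fun n ω =>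
    Real.cosh (L * ‖f n ω - f 0 ω‖) * Real.exp (-(L ^ 2 * S n ω) / 2) with hGrdef
  have hSm : ∀ n, Measurable (S n) := by
    intro n
    apply Finset.measurable_sum
    intro j _
    exact ((hfm _).sub (hfm _)).norm.pow_const 2
  have hGrm : ∀ n, Measurable (Gr n) := by
    intro n
    apply Measurable.mul
    · exact Real.continuous_cosh.measurable.comp
        (measurable_const.mul ((hfm n).sub (hfm 0)).norm)
    · exact Real.continuous_exp.measurable.comp
        ((measurable_const.mul (hSm n)).neg.div_const 2)
  have hGrpos : ∀ n ω, 0 < Gr n ω := fun n ω =>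
    mul_pos (Real.cosh_pos _) (Real.exp_pos _)
  have hSsucc : ∀ n ω, S (n + 1) ω = S n ω + ‖f (n + 1) ω - f n ω‖ ^ 2 := by
    intro n ω
    simp only [hS]
    exact Finset.sum_range_succ _ n
  have hGr0 : ∀ ω, Gr 0 ω = 1 := by
    intro ω
    simp [hGrdef, hS]
  set χ : ℕ → Ω → Prop := fun N ω => ∀ k, 1 ≤ k → k ≤ N → Gr k ω < t with hχdef
  have hχm : ∀ N, MeasurableSet {ω | χ N ω} := by
    intro N
    have heq : {ω | χ N ω} = ⋂ k, {ω | 1 ≤ k → k ≤ N → Gr k ω < t} := by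
      ext ω; simp [hχdef, Set.mem_iInter]
    rw [heq]
    apply MeasurableSet.iInter
    intro k
    by_cases h1 : 1 ≤ k
    · by_cases h2 : k ≤ N
      · have : {ω | 1 ≤ k → k ≤ N → Gr k ω < t} = {ω | Gr k ω < t} := by
          ext ω; simp [h1, h2]
        rw [this]
        exact measurableSet_lt (hGrm k) measurable_const
      · have : {ω | 1 ≤ k → k ≤ N → Gr k ω < t} = Set.univ := by
          ext ω; simp [h2]
        rw [this]; exact MeasurableSet.univ
    · have : {ω | 1 ≤ k → k ≤ N → Gr k ω < t} = Set.univ := by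
        ext ω; simp [h1]
      rw [this]; exact MeasurableSet.univ
  have hχmono : ∀ N ω, χ (N + 1) ω → χ N ω := by
    intro N ω h k hk1 hk2
    exact h k hk1 (hk2.trans (Nat.le_succ N))
  set W : ℕ → Ω → ℝ≥0∞ := fun N ω =>
    if χ N ω then ENNReal.ofReal (Gr N ω) else ENNReal.ofReal t with hWdef
  -- the key supermartingale-type inequality
  have hkey : ∀ N : ℕ,
      (∫⁻ ω, (if χ N ω then ENNReal.ofReal (Gr (N + 1) ω) else 0) ∂μ) ≤
      (∫⁻ ω, (if χ N ω then ENNReal.ofReal (Gr N ω) else 0) ∂μ) := by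
    intro N
    set P : (Fin (N + 1) → H) → ℕ → H :=
      fun v i => if h : i < N + 1 then v ⟨i, h⟩ else 0 with hP
    have hPm : ∀ i, Measurable (fun v => P v i) := by
      intro i
      simp only [hP]
      by_cases h : i < N + 1
      · simp only [dif_pos h]; exact measurable_pi_apply _
      · simp only [dif_neg h]; exact measurable_const
    set GrV : ℕ → (Fin (N + 1) → H) → ℝ := fun k v =>
      Real.cosh (L * ‖∑ i ∈ Finset.range k, P v i‖) *
        Real.exp (-(L ^ 2 * ∑ i ∈ Finset.range k, ‖P v i‖ ^ 2) / 2) with hGrV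
    have hGrVm : ∀ k, Measurable (GrV k) := by
      intro k
      apply Measurable.mul
      · apply Real.continuous_cosh.measurable.comp
        apply Measurable.const_mul
        exact (Finset.measurable_sum _ fun i _ => hPm i).norm
      · apply Real.continuous_exp.measurable.comp
        apply Measurable.div_const
        apply Measurable.neg
        apply Measurable.const_mul
        exact Finset.measurable_sum _ fun i _ => (hPm i).norm.pow_const 2
    set Ψ : (Fin (N + 1) → H) → ℝ≥0∞ := fun v =>
      if (∀ k, 1 ≤ k → k ≤ N → GrV k v < t) then ENNReal.ofReal (GrV (N + 1) v) else 0
      with hΨdef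
    have hcondm : MeasurableSet {v : Fin (N + 1) → H | ∀ k, 1 ≤ k → k ≤ N → GrV k v < t} := by
      have heq : {v : Fin (N + 1) → H | ∀ k, 1 ≤ k → k ≤ N → GrV k v < t} =
          ⋂ k, {v | 1 ≤ k → k ≤ N → GrV k v < t} := by
        ext v; simp [Set.mem_iInter]
      rw [heq]
      apply MeasurableSet.iInter
      intro k
      by_cases h1 : 1 ≤ k
      · by_cases h2 : k ≤ N
        · have : {v : Fin (N + 1) → H | 1 ≤ k → k ≤ N → GrV k v < t} = {v | GrV k v < t} := by
            ext v; simp [h1, h2]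
          rw [this]
          exact measurableSet_lt (hGrVm k) measurable_const
        · have : {v : Fin (N + 1) → H | 1 ≤ k → k ≤ N → GrV k v < t} = Set.univ := by
            ext v; simp [h2]
          rw [this]; exact MeasurableSet.univ
      · have : {v : Fin (N + 1) → H | 1 ≤ k → k ≤ N → GrV k v < t} = Set.univ := by
          ext v; simp [h1]
        rw [this]; exact MeasurableSet.univ
    have hΨm : Measurable Ψ := by
      apply Measurable.ite hcondm
      · exact ENNReal.measurable_ofReal.comp (hGrVm (N + 1))
      · exact measurable_const
    -- identification of GrV along the two maps
    have hPD : ∀ ω (i : ℕ), i < N + 1 →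
        P (fun i : Fin (N + 1) => f ((i : ℕ) + 1) ω - f (i : ℕ) ω) i
          = f (i + 1) ω - f i ω := by
      intro ω i h
      simp only [hP, dif_pos h]
    have hPD' : ∀ ω (i : ℕ) (h : i < N + 1),
        P (fun i : Fin (N + 1) =>
            if (i : ℕ) = N then -(f ((i : ℕ) + 1) ω - f (i : ℕ) ω)
            else f ((i : ℕ) + 1) ω - f (i : ℕ) ω) i
          = if i = N then -(f (i + 1) ω - f i ω) else f (i + 1) ω - f i ω := by
      intro ω i h
      simp only [hP, dif_pos h]
    have hGrVD : ∀ ω k, k ≤ N + 1 →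
        GrV k (fun i : Fin (N + 1) => f ((i : ℕ) + 1) ω - f (i : ℕ) ω) = Gr k ω := by
      intro ω k hk
      have hsum1 : ∑ i ∈ Finset.range k,
          P (fun i : Fin (N + 1) => f ((i : ℕ) + 1) ω - f (i : ℕ) ω) i
          = f k ω - f 0 ω := by
        rw [Finset.sum_congr rfl fun i hi =>
          hPD ω i (lt_of_lt_of_le (Finset.mem_range.mp hi) hk)]
        exact Finset.sum_range_sub (fun n => f n ω) k
      have hsum2 : ∑ i ∈ Finset.range k,
          ‖P (fun i : Fin (N + 1) => f ((i : ℕ) + 1) ω - f (i : ℕ) ω) i‖ ^ 2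
          = S k ω := by
        simp only [hS]
        exact Finset.sum_congr rfl fun i hi => by
          rw [hPD ω i (lt_of_lt_of_le (Finset.mem_range.mp hi) hk)]
      simp only [hGrV, hGrdef, hsum1, hsum2]
    have hGrVD' : ∀ ω k, k ≤ N →
        GrV k (fun i : Fin (N + 1) =>
            if (i : ℕ) = N then -(f ((i : ℕ) + 1) ω - f (i : ℕ) ω)
            else f ((i : ℕ) + 1) ω - f (i : ℕ) ω) = Gr k ω := by
      intro ω k hk
      have hsum1 : ∑ i ∈ Finset.range k,
          P (fun i : Fin (N + 1) =>
            if (i : ℕ) = N then -(f ((i : ℕ) + 1) ω - f (i : ℕ) ω)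
            else f ((i : ℕ) + 1) ω - f (i : ℕ) ω) i
          = f k ω - f 0 ω := by
        have hcg : ∀ i ∈ Finset.range k,
            P (fun i : Fin (N + 1) =>
              if (i : ℕ) = N then -(f ((i : ℕ) + 1) ω - f (i : ℕ) ω)
              else f ((i : ℕ) + 1) ω - f (i : ℕ) ω) i = f (i + 1) ω - f i ω := by
          intro i hi
          have hik : i < k := Finset.mem_range.mp hi
          have h1 : i < N + 1 := lt_of_lt_of_le hik (hk.trans (Nat.le_succ N))
          have h2 : i ≠ N := Nat.ne_of_lt (lt_of_lt_of_le hik hk)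
          rw [hPD' ω i h1, if_neg h2]
        rw [Finset.sum_congr rfl hcg]
        exact Finset.sum_range_sub (fun n => f n ω) k
      have hsum2 : ∑ i ∈ Finset.range k,
          ‖P (fun i : Fin (N + 1) =>
            if (i : ℕ) = N then -(f ((i : ℕ) + 1) ω - f (i : ℕ) ω)
            else f ((i : ℕ) + 1) ω - f (i : ℕ) ω) i‖ ^ 2
          = S k ω := by
        simp only [hS]
        refine Finset.sum_congr rfl fun i hi => ?_
        have hik : i < k := Finset.mem_range.mp hi
        have h1 : i < N + 1 := lt_of_lt_of_le hik (hk.trans (Nat.le_succ N))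
        have h2 : i ≠ N := Nat.ne_of_lt (lt_of_lt_of_le hik hk)
        rw [hPD' ω i h1, if_neg h2]
      simp only [hGrV, hGrdef, hsum1, hsum2]
    have hGrVD'last : ∀ ω,
        GrV (N + 1) (fun i : Fin (N + 1) =>
            if (i : ℕ) = N then -(f ((i : ℕ) + 1) ω - f (i : ℕ) ω)
            else f ((i : ℕ) + 1) ω - f (i : ℕ) ω)
          = Real.cosh (L * ‖(f N ω - f 0 ω) - (f (N + 1) ω - f N ω)‖) *
              Real.exp (-(L ^ 2 * S (N + 1) ω) / 2) := by
      intro ω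
      have hsum1 : ∑ i ∈ Finset.range (N + 1),
          P (fun i : Fin (N + 1) =>
            if (i : ℕ) = N then -(f ((i : ℕ) + 1) ω - f (i : ℕ) ω)
            else f ((i : ℕ) + 1) ω - f (i : ℕ) ω) i
          = (f N ω - f 0 ω) - (f (N + 1) ω - f N ω) := by
        rw [Finset.sum_range_succ]
        have hlast : P (fun i : Fin (N + 1) =>
            if (i : ℕ) = N then -(f ((i : ℕ) + 1) ω - f (i : ℕ) ω)
            else f ((i : ℕ) + 1) ω - f (i : ℕ) ω) N
            = -(f (N + 1) ω - f N ω) := by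
          rw [hPD' ω N (Nat.lt_succ_self N), if_pos rfl]
        have hpre : ∑ i ∈ Finset.range N,
            P (fun i : Fin (N + 1) =>
              if (i : ℕ) = N then -(f ((i : ℕ) + 1) ω - f (i : ℕ) ω)
              else f ((i : ℕ) + 1) ω - f (i : ℕ) ω) i
            = f N ω - f 0 ω := by
          have hcg : ∀ i ∈ Finset.range N,
              P (fun i : Fin (N + 1) =>
                if (i : ℕ) = N then -(f ((i : ℕ) + 1) ω - f (i : ℕ) ω)
                else f ((i : ℕ) + 1) ω - f (i : ℕ) ω) i = f (i + 1) ω - f i ω := by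
            intro i hi
            have hik : i < N := Finset.mem_range.mp hi
            rw [hPD' ω i (hik.trans (Nat.lt_succ_self N)), if_neg (Nat.ne_of_lt hik)]
          rw [Finset.sum_congr rfl hcg]
          exact Finset.sum_range_sub (fun n => f n ω) N
        rw [hlast, hpre]
        abel
      have hsum2 : ∑ i ∈ Finset.range (N + 1),
          ‖P (fun i : Fin (N + 1) =>
            if (i : ℕ) = N then -(f ((i : ℕ) + 1) ω - f (i : ℕ) ω)
            else f ((i : ℕ) + 1) ω - f (i : ℕ) ω) i‖ ^ 2
          = S (N + 1) ω := by
        simp only [hS]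
        refine Finset.sum_congr rfl fun i hi => ?_
        have hik : i < N + 1 := Finset.mem_range.mp hi
        rw [hPD' ω i hik]
        rcases eq_or_ne i N with h | h
        · rw [if_pos h, norm_neg]
        · rw [if_neg h]
      simp only [hGrV, hsum1, hsum2]
    -- apply the symmetry lemma
    have hsym := key_step f hfm hsymm N Ψ hΨm
    -- rewrite the two sides
    have hLHS : (fun ω => Ψ (fun i : Fin (N + 1) => f ((i : ℕ) + 1) ω - f (i : ℕ) ω)) =
        fun ω => if χ N ω then ENNReal.ofReal (Gr (N + 1) ω) else 0 := by
      funext ω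
      simp only [hΨdef]
      have hcond : (∀ k, 1 ≤ k → k ≤ N →
          GrV k (fun i : Fin (N + 1) => f ((i : ℕ) + 1) ω - f (i : ℕ) ω) < t) ↔ χ N ω := by
        simp only [hχdef]
        constructor
        · intro h k hk1 hk2
          have := h k hk1 hk2
          rwa [hGrVD ω k (hk2.trans (Nat.le_succ N))] at this
        · intro h k hk1 hk2
          rw [hGrVD ω k (hk2.trans (Nat.le_succ N))]
          exact h k hk1 hk2
      by_cases h : χ N ω
      · rw [if_pos (hcond.mpr h), if_pos h, hGrVD ω (N + 1) le_rfl]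
      · rw [if_neg (fun hh => h (hcond.mp hh)), if_neg h]
    have hRHS : (fun ω => Ψ (fun i : Fin (N + 1) =>
          if (i : ℕ) = N then -(f ((i : ℕ) + 1) ω - f (i : ℕ) ω)
          else f ((i : ℕ) + 1) ω - f (i : ℕ) ω)) =
        fun ω => if χ N ω then
          ENNReal.ofReal (Real.cosh (L * ‖(f N ω - f 0 ω) - (f (N + 1) ω - f N ω)‖) *
            Real.exp (-(L ^ 2 * S (N + 1) ω) / 2)) else 0 := by
      funext ω
      simp only [hΨdef]
      have hcond : (∀ k, 1 ≤ k → k ≤ N →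
          GrV k (fun i : Fin (N + 1) =>
            if (i : ℕ) = N then -(f ((i : ℕ) + 1) ω - f (i : ℕ) ω)
            else f ((i : ℕ) + 1) ω - f (i : ℕ) ω) < t) ↔ χ N ω := by
        simp only [hχdef]
        constructor
        · intro h k hk1 hk2
          have := h k hk1 hk2
          rwa [hGrVD' ω k hk2] at this
        · intro h k hk1 hk2
          rw [hGrVD' ω k hk2]
          exact h k hk1 hk2
      by_cases h : χ N ω
      · rw [if_pos (hcond.mpr h), if_pos h, hGrVD'last ω]
      · rw [if_neg (fun hh => h (hcond.mp hh)), if_neg h]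
    rw [hLHS, hRHS] at hsym
    -- pointwise bound
    have hpt : ∀ ω,
        (if χ N ω then ENNReal.ofReal (Gr (N + 1) ω) else 0) +
        (if χ N ω then
          ENNReal.ofReal (Real.cosh (L * ‖(f N ω - f 0 ω) - (f (N + 1) ω - f N ω)‖) *
            Real.exp (-(L ^ 2 * S (N + 1) ω) / 2)) else 0)
        ≤ 2 * (if χ N ω then ENNReal.ofReal (Gr N ω) else 0) := by
      intro ω
      by_cases h : χ N ω
      · rw [if_pos h, if_pos h, if_pos h]
        set g := f N ω - f 0 ω
        set dd := f (N + 1) ω - f N ω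
        have hgd : f (N + 1) ω - f 0 ω = g + dd := by simp only [g, dd]; abel
        have hpin := pinelis_pointwise (L • g) (L • dd)
        rw [← smul_add, ← smul_sub, norm_smul, norm_smul, norm_smul, norm_smul,
          Real.norm_eq_abs, abs_of_pos hLpos] at hpin
        have hnsq : (L * ‖dd‖) ^ 2 / 2 = L ^ 2 * ‖dd‖ ^ 2 / 2 := by ring
        rw [hnsq] at hpin
        have hreal : Gr (N + 1) ω +
            Real.cosh (L * ‖g - dd‖) * Real.exp (-(L ^ 2 * S (N + 1) ω) / 2)
            ≤ 2 * Gr N ω := by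
          have hGrsucc : Gr (N + 1) ω =
              Real.cosh (L * ‖g + dd‖) * Real.exp (-(L ^ 2 * S (N + 1) ω) / 2) := by
            simp only [hGrdef, hgd]
          rw [hGrsucc, hSsucc N ω]
          have hexp : Real.exp (L ^ 2 * ‖dd‖ ^ 2 / 2) *
              Real.exp (-(L ^ 2 * (S N ω + ‖dd‖ ^ 2)) / 2) =
              Real.exp (-(L ^ 2 * S N ω) / 2) := by
            rw [← Real.exp_add]; congr 1; ring
          have hGrN : Gr N ω = Real.cosh (L * ‖g‖) * Real.exp (-(L ^ 2 * S N ω) / 2) := by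
            simp only [hGrdef, g]
          have hE : (0:ℝ) < Real.exp (-(L ^ 2 * (S N ω + ‖dd‖ ^ 2)) / 2) := Real.exp_pos _
          have := mul_le_mul_of_nonneg_right hpin (le_of_lt hE)
          rw [add_mul] at this
          calc Real.cosh (L * ‖g + dd‖) * Real.exp (-(L ^ 2 * (S N ω + ‖dd‖ ^ 2)) / 2) +
                Real.cosh (L * ‖g - dd‖) * Real.exp (-(L ^ 2 * (S N ω + ‖dd‖ ^ 2)) / 2)
              ≤ 2 * Real.cosh (L * ‖g‖) * Real.exp (L ^ 2 * ‖dd‖ ^ 2 / 2) *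
                Real.exp (-(L ^ 2 * (S N ω + ‖dd‖ ^ 2)) / 2) := this
            _ = 2 * Gr N ω := by
                rw [hGrN, ← hexp]
                ring
        have h1 : (0:ℝ) ≤ Gr (N + 1) ω := (hGrpos _ _).le
        have h2 : (0:ℝ) ≤ Real.cosh (L * ‖g - dd‖) * Real.exp (-(L ^ 2 * S (N + 1) ω) / 2) :=
          mul_nonneg (Real.cosh_pos _).le (Real.exp_pos _).le
        rw [← ENNReal.ofReal_add h1 h2]
        calc ENNReal.ofReal (Gr (N + 1) ω + _) ≤ ENNReal.ofReal (2 * Gr N ω) :=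
              ENNReal.ofReal_le_ofReal hreal
          _ = 2 * ENNReal.ofReal (Gr N ω) := by
              rw [ENNReal.ofReal_mul (by norm_num)]
              norm_num
      · rw [if_neg h, if_neg h, if_neg h]
        simp
    -- combine
    have hmeas1 : Measurable (fun ω => if χ N ω then ENNReal.ofReal (Gr (N + 1) ω) else 0) :=
      Measurable.ite (hχm N) (ENNReal.measurable_ofReal.comp (hGrm (N + 1))) measurable_const
    have hmeasprev : Measurable (fun ω => if χ N ω then ENNReal.ofReal (Gr N ω) else 0) :=
      Measurable.ite (hχm N) (ENNReal.measurable_ofReal.comp (hGrm N)) measurable_const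
    have h2int : 2 * (∫⁻ ω, (if χ N ω then ENNReal.ofReal (Gr (N + 1) ω) else 0) ∂μ)
        ≤ 2 * (∫⁻ ω, (if χ N ω then ENNReal.ofReal (Gr N ω) else 0) ∂μ) := by
      calc 2 * (∫⁻ ω, (if χ N ω then ENNReal.ofReal (Gr (N + 1) ω) else 0) ∂μ)
          = (∫⁻ ω, (if χ N ω then ENNReal.ofReal (Gr (N + 1) ω) else 0) ∂μ) +
            (∫⁻ ω, (if χ N ω then
              ENNReal.ofReal (Real.cosh (L * ‖(f N ω - f 0 ω) - (f (N + 1) ω - f N ω)‖) *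
                Real.exp (-(L ^ 2 * S (N + 1) ω) / 2)) else 0) ∂μ) := by
            rw [← hsym, two_mul]
        _ = ∫⁻ ω, ((if χ N ω then ENNReal.ofReal (Gr (N + 1) ω) else 0) +
            (if χ N ω then
              ENNReal.ofReal (Real.cosh (L * ‖(f N ω - f 0 ω) - (f (N + 1) ω - f N ω)‖) *
                Real.exp (-(L ^ 2 * S (N + 1) ω) / 2)) else 0)) ∂μ := by
            rw [lintegral_add_left hmeas1]
        _ ≤ ∫⁻ ω, 2 * (if χ N ω then ENNReal.ofReal (Gr N ω) else 0) ∂μ :=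
            lintegral_mono hpt
        _ = 2 * (∫⁻ ω, (if χ N ω then ENNReal.ofReal (Gr N ω) else 0) ∂μ) :=
            lintegral_const_mul 2 hmeasprev
    exact (ENNReal.mul_le_mul_iff_right (two_ne_zero) ENNReal.ofNat_ne_top).mp h2int
  -- the main induction: ∫ W N ≤ 1
  have hWle : ∀ N, (∫⁻ ω, W N ω ∂μ) ≤ 1 := by
    intro N
    induction N with
    | zero =>
      have : ∀ ω, W 0 ω = 1 := by
        intro ω
        have hχ0 : χ 0 ω := by
          intro k hk1 hk2
          omega
        simp only [hWdef, if_pos hχ0, hGr0, ENNReal.ofReal_one]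
      rw [lintegral_congr this]
      simp
    | succ N ih =>
      have hptW : ∀ ω, W (N + 1) ω ≤
          (if χ N ω then ENNReal.ofReal (Gr (N + 1) ω) else 0) +
          (if χ N ω then 0 else ENNReal.ofReal t) := by
        intro ω
        by_cases h : χ N ω
        · rw [if_pos h, if_pos h, add_zero]
          simp only [hWdef]
          by_cases h2 : χ (N + 1) ω
          · rw [if_pos h2]
          · rw [if_neg h2]
            apply ENNReal.ofReal_le_ofReal
            -- t ≤ Gr (N+1) ω
            simp only [hχdef] at h2
            push_neg at h2
            obtain ⟨k, hk1, hk2, hk3⟩ := h2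
            rcases eq_or_lt_of_le hk2 with heq | hlt
            · exact heq ▸ hk3
            · exact absurd (h k hk1 (Nat.lt_succ_iff.mp hlt)) (not_lt.mpr hk3)
        · rw [if_neg h, if_neg h, zero_add]
          simp only [hWdef]
          rw [if_neg (fun h2 => h (hχmono N ω h2))]
      have hmeasA : Measurable (fun ω => if χ N ω then ENNReal.ofReal (Gr (N + 1) ω) else 0) :=
        Measurable.ite (hχm N) (ENNReal.measurable_ofReal.comp (hGrm (N + 1))) measurable_const
      have hWNeq : ∀ ω, (if χ N ω then ENNReal.ofReal (Gr N ω) else 0) +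
          (if χ N ω then 0 else ENNReal.ofReal t) = W N ω := by
        intro ω
        by_cases h : χ N ω
        · simp only [hWdef, if_pos h, add_zero]
        · simp only [hWdef, if_neg h, zero_add]
      calc (∫⁻ ω, W (N + 1) ω ∂μ)
          ≤ ∫⁻ ω, ((if χ N ω then ENNReal.ofReal (Gr (N + 1) ω) else 0) +
            (if χ N ω then 0 else ENNReal.ofReal t)) ∂μ := lintegral_mono hptW
        _ = (∫⁻ ω, (if χ N ω then ENNReal.ofReal (Gr (N + 1) ω) else 0) ∂μ) +
            (∫⁻ ω, (if χ N ω then 0 else ENNReal.ofReal t) ∂μ) := lintegral_add_left hmeasA _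
        _ ≤ (∫⁻ ω, (if χ N ω then ENNReal.ofReal (Gr N ω) else 0) ∂μ) +
            (∫⁻ ω, (if χ N ω then 0 else ENNReal.ofReal t) ∂μ) := by
            exact add_le_add_left (hkey N) _
        _ = ∫⁻ ω, ((if χ N ω then ENNReal.ofReal (Gr N ω) else 0) +
            (if χ N ω then 0 else ENNReal.ofReal t)) ∂μ := by
            rw [lintegral_add_left]
            exact Measurable.ite (hχm N) (ENNReal.measurable_ofReal.comp (hGrm N))
              measurable_const
        _ = ∫⁻ ω, W N ω ∂μ := lintegral_congr hWNeq
        _ ≤ 1 := ih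
  -- event inclusion
  have hincl : {ω | ∃ n : ℕ, 1 ≤ n ∧
          0 < (∑ j ∈ Finset.range n, ‖f (j + 1) ω - f j ω‖ ^ 2) ∧
          r ≤ ‖f n ω - f 0 ω‖ /
              (α + β * ∑ j ∈ Finset.range n, ‖f (j + 1) ω - f j ω‖ ^ 2) ∧
          1 / (∑ j ∈ Finset.range n, ‖f (j + 1) ω - f j ω‖ ^ 2) ≤ b}
      ⊆ ⋃ N, {ω | ¬ χ N ω} := by
    intro ω hω
    obtain ⟨n, hn1, hSpos, hrle, hble⟩ := hω
    have hSpos' : (0:ℝ) < S n ω := hSpos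
    have hble' : 1 / S n ω ≤ b := hble
    have hdenom : (0:ℝ) < α + β * S n ω := by positivity
    have hX : r * (α + β * S n ω) ≤ ‖f n ω - f 0 ω‖ := by
      have h0 : r ≤ ‖f n ω - f 0 ω‖ / (α + β * S n ω) := hrle
      rwa [le_div_iff₀ hdenom] at h0
    have h1bS : 1 ≤ b * S n ω := by
      rw [div_le_iff₀ hSpos'] at hble'
      linarith
    have hexp : c ≤ L * ‖f n ω - f 0 ω‖ - L ^ 2 * S n ω / 2 := by
      have hLX : r * β * (r * (α + β * S n ω)) ≤ r * β * ‖f n ω - f 0 ω‖ :=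
        mul_le_mul_of_nonneg_left hX (by positivity)
      have hSball : r ^ 2 * β ^ 2 / (2 * b) ≤ r ^ 2 * β ^ 2 * S n ω / 2 := by
        rw [div_le_div_iff₀ (by positivity) (by norm_num)]
        nlinarith [mul_nonneg (mul_nonneg (sq_nonneg r) (sq_nonneg β))
          (sub_nonneg.mpr h1bS)]
      rw [hc, hL]
      have e1 : r * β * (r * (α + β * S n ω)) = r ^ 2 * (α * β) + r ^ 2 * β ^ 2 * S n ω := by
        ring
      rw [e1] at hLX
      have e2 : (r * β) ^ 2 * S n ω / 2 = r ^ 2 * β ^ 2 * S n ω / 2 := by ring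
      rw [e2]
      have e3 : r ^ 2 * (β ^ 2 / (2 * b) + α * β) =
          r ^ 2 * β ^ 2 / (2 * b) + r ^ 2 * (α * β) := by ring
      rw [e3]
      linarith [hLX, hSball]
    have hGrn : t ≤ Gr n ω := by
      have hch : Real.exp (L * ‖f n ω - f 0 ω‖) / 2 ≤ Real.cosh (L * ‖f n ω - f 0 ω‖) := by
        rw [Real.cosh_eq]
        have := (Real.exp_pos (-(L * ‖f n ω - f 0 ω‖))).le
        linarith
      have hstep : Real.exp c ≤
          Real.exp (L * ‖f n ω - f 0 ω‖) * Real.exp (-(L ^ 2 * S n ω) / 2) := by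
        rw [← Real.exp_add]
        apply Real.exp_le_exp.mpr
        linarith [hexp]
      have ht2 : t ≤ Real.exp (L * ‖f n ω - f 0 ω‖) / 2 * Real.exp (-(L ^ 2 * S n ω) / 2) := by
        rw [ht, div_mul_eq_mul_div]
        linarith [hstep]
      calc t ≤ Real.exp (L * ‖f n ω - f 0 ω‖) / 2 * Real.exp (-(L ^ 2 * S n ω) / 2) := ht2
        _ ≤ Real.cosh (L * ‖f n ω - f 0 ω‖) * Real.exp (-(L ^ 2 * S n ω) / 2) :=
            mul_le_mul_of_nonneg_right hch (Real.exp_pos _).le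
        _ = Gr n ω := by rw [hGrdef]
    apply Set.mem_iUnion.mpr
    refine ⟨n, ?_⟩
    simp only [Set.mem_setOf_eq, hχdef]
    push_neg
    exact ⟨n, hn1, le_rfl, hGrn⟩
  -- final assembly
  have hENm : ∀ N, MeasurableSet {ω | ¬ χ N ω} := by
    intro N
    have heq : {ω | ¬ χ N ω} = {ω | χ N ω}ᶜ := by ext ω; simp
    rw [heq]; exact (hχm N).compl
  have hENbound : ∀ N, μ {ω | ¬ χ N ω} ≤ ENNReal.ofReal (2 * Real.exp (-c)) := by
    intro N
    have h1 : ENNReal.ofReal t * μ {ω | ¬ χ N ω} ≤ 1 := by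
      calc ENNReal.ofReal t * μ {ω | ¬ χ N ω}
          = ∫⁻ _ω in {ω | ¬ χ N ω}, ENNReal.ofReal t ∂μ := by
            rw [setLIntegral_const, mul_comm]
        _ = ∫⁻ ω in {ω | ¬ χ N ω}, W N ω ∂μ := by
            apply setLIntegral_congr_fun (hENm N)
            exact fun ω hω => by
              simp only [hWdef, if_neg hω]
        _ ≤ ∫⁻ ω, W N ω ∂μ := setLIntegral_le_lintegral _ _
        _ ≤ 1 := hWle N
    have hne0 : ENNReal.ofReal t ≠ 0 := (ENNReal.ofReal_pos.mpr htpos).ne'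
    have hnetop : ENNReal.ofReal t ≠ ⊤ := ENNReal.ofReal_ne_top
    have h2 : μ {ω | ¬ χ N ω} ≤ (ENNReal.ofReal t)⁻¹ := by
      calc μ {ω | ¬ χ N ω}
          = (ENNReal.ofReal t)⁻¹ * (ENNReal.ofReal t * μ {ω | ¬ χ N ω}) := by
            rw [← mul_assoc, ENNReal.inv_mul_cancel hne0 hnetop, one_mul]
        _ ≤ (ENNReal.ofReal t)⁻¹ * 1 := mul_le_mul_right h1 _
        _ = (ENNReal.ofReal t)⁻¹ := mul_one _
    have h3 : (ENNReal.ofReal t)⁻¹ = ENNReal.ofReal (2 * Real.exp (-c)) := by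
      rw [← ENNReal.ofReal_inv_of_pos htpos]
      congr 1
      rw [ht, Real.exp_neg]
      rw [inv_div]
      rw [div_eq_mul_inv]
    rw [← h3]
    exact h2
  have hmono : Monotone (fun N => {ω | ¬ χ N ω}) := by
    intro N M hNM ω hω
    simp only [Set.mem_setOf_eq] at *
    intro hχM
    exact hω (fun k hk1 hk2 => hχM k hk1 (hk2.trans hNM))
  calc μ {ω | ∃ n : ℕ, 1 ≤ n ∧
          0 < (∑ j ∈ Finset.range n, ‖f (j + 1) ω - f j ω‖ ^ 2) ∧
          r ≤ ‖f n ω - f 0 ω‖ /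
              (α + β * ∑ j ∈ Finset.range n, ‖f (j + 1) ω - f j ω‖ ^ 2) ∧
          1 / (∑ j ∈ Finset.range n, ‖f (j + 1) ω - f j ω‖ ^ 2) ≤ b}
      ≤ μ (⋃ N, {ω | ¬ χ N ω}) := measure_mono hincl
    _ = ⨆ N, μ {ω | ¬ χ N ω} := hmono.directed_le.measure_iUnion
    _ ≤ ENNReal.ofReal (2 * Real.exp (-c)) := iSup_le hENbound
    _ ≤ ENNReal.ofReal (4 * Real.exp (-(r ^ 2) * (β ^ 2 / (2 * b) + α * β))) := by
        apply ENNReal.ofReal_le_ofReal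
        have hcc : -c = -(r ^ 2) * (β ^ 2 / (2 * b) + α * β) := by rw [hc]; ring
        rw [hcc]
        nlinarith [Real.exp_pos (-(r ^ 2) * (β ^ 2 / (2 * b) + α * β))]
end

section
/- Let X be a separable Banach space and let f = (f_j)_{j≥0} be an X-valued conditionally symmetric martingale relative to a filtration (F_j)_{j≥0} with F_0 trivial. Define the filtration (G_j)_{j≥0} by G_j = σ(d_0, d_1, …, d_j, ‖d_{j+1}‖), where d_0 = f_0. Then f is also a martingale relative to (G_j)_{j≥0}; in particular, each f_j is G_j-measurable and E[f_{j+1} | G_j] = f_j for every j ≥ 0, so the sequence (‖d_j‖)_{j≥1} is predictable relative to (G_j). -/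
open MeasureTheory
open scoped ENNReal NNReal

theorem cond_symmetric_enlarged_filtration
    {Ω X : Type*} {m : MeasurableSpace Ω} {μ : Measure Ω} [IsProbabilityMeasure μ]
    [NormedAddCommGroup X] [NormedSpace ℝ X] [CompleteSpace X]
    [TopologicalSpace.SeparableSpace X]
    (ℱ : Filtration ℕ m) (hℱ0 : ℱ 0 = ⊥)
    (f : ℕ → Ω → X) (hf : Martingale f ℱ μ)
    (hsymm : CondSymmetric μ f) :
    ∃ 𝒢 : Filtration ℕ m,
      (∀ j : ℕ, 𝒢 j =
        (MeasurableSpace.comap (f 0) (borel X) ⊔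
          ⨆ i ∈ Finset.Icc 1 j, MeasurableSpace.comap (fun ω => f i ω - f (i - 1) ω) (borel X)) ⊔
          MeasurableSpace.comap (fun ω => ‖f (j + 1) ω - f j ω‖) (borel ℝ)) ∧
      Martingale f 𝒢 μ ∧
      (∀ j : ℕ, StronglyMeasurable[𝒢 j] (f j)) ∧
      (∀ j : ℕ, μ[f (j + 1) | 𝒢 j] =ᵐ[μ] f j) ∧
      (∀ j : ℕ, Measurable[𝒢 j] fun ω => ‖f (j + 1) ω - f j ω‖) := by
  borelize X
  haveI : SecondCountableTopology X := UniformSpace.secondCountable_of_separable X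
  haveI : Nonempty Ω := by
    by_contra h
    rw [not_nonempty_iff] at h
    have : μ Set.univ = 1 := measure_univ
    simp [Set.univ_eq_empty_iff.mpr h] at this
  have hbX : borel X = ‹MeasurableSpace X› := rfl
  have hbR : borel ℝ = (inferInstance : MeasurableSpace ℝ) := BorelSpace.measurable_eq.symm
  -- f 0 is constant
  obtain ⟨c0, hc0⟩ : ∃ c, f 0 = fun _ => c := by
    have h0 := hf.stronglyAdapted 0
    rw [hℱ0] at h0
    exact stronglyMeasurable_bot_iff.mp h0
  -- difference sequence
  set d : ℕ → Ω → X := fun i ω => f (i + 1) ω - f i ω with hd_def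
  have hd_meas : ∀ i, Measurable (d i) := fun i =>
    (((hf.stronglyMeasurable (i + 1)).mono (ℱ.le _)).measurable).sub
      (((hf.stronglyMeasurable i).mono (ℱ.le _)).measurable)
  -- the enlarged σ-algebras
  set G : ℕ → MeasurableSpace Ω := fun j =>
    (MeasurableSpace.comap (f 0) (borel X) ⊔
      ⨆ i ∈ Finset.Icc 1 j, MeasurableSpace.comap (fun ω => f i ω - f (i - 1) ω) (borel X)) ⊔
      MeasurableSpace.comap (fun ω => ‖f (j + 1) ω - f j ω‖) (borel ℝ) with hG_def
  have hcomap_f0 : MeasurableSpace.comap (f 0) (borel X) = ⊥ := by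
    rw [hc0]; exact MeasurableSpace.comap_const _
  -- the i-th generator equals comap of d (i-1)
  have hgen : ∀ i : ℕ, 1 ≤ i →
      (fun ω => f i ω - f (i - 1) ω) = d (i - 1) := by
    intro i hi
    funext ω
    simp only [hd_def]
    rw [Nat.sub_add_cancel hi]
  -- S j : the generating map for G j
  set S : ∀ j : ℕ, Ω → (Fin j → X) × ℝ :=
    fun j ω => (fun i => d i ω, ‖d j ω‖) with hS_def
  have hS_meas : ∀ j, Measurable (S j) := by
    intro j
    apply Measurable.prodMk
    · exact measurable_pi_lambda _ fun i => hd_meas (i : ℕ)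
    · exact (hd_meas j).norm
  have hG_le_comap : ∀ j, G j ≤ MeasurableSpace.comap (S j) inferInstance := by
    intro j
    refine sup_le (sup_le ?_ ?_) ?_
    · rw [hcomap_f0]; exact bot_le
    · refine iSup_le fun i => iSup_le fun hi => ?_
      have hi1 : 1 ≤ i := (Finset.mem_Icc.mp hi).1
      have hij : i - 1 < j := by
        have := (Finset.mem_Icc.mp hi).2
        omega
      rw [hgen i hi1, hbX]
      have : d (i - 1) = (fun p : (Fin j → X) × ℝ => p.1 ⟨i - 1, hij⟩) ∘ S j := rfl
      rw [this, ← MeasurableSpace.comap_comp]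
      exact MeasurableSpace.comap_mono
        (Measurable.comap_le ((measurable_pi_apply _).comp measurable_fst))
    · rw [hbR]
      have : (fun ω => ‖f (j + 1) ω - f j ω‖) = Prod.snd ∘ S j := rfl
      rw [this, ← MeasurableSpace.comap_comp]
      exact MeasurableSpace.comap_mono (Measurable.comap_le measurable_snd)
  have hG_le : ∀ j, G j ≤ m := fun j =>
    le_trans (hG_le_comap j) (Measurable.comap_le (hS_meas j))
  have hG_mono : Monotone G := by
    refine monotone_nat_of_le_succ fun j => ?_
    refine sup_le (sup_le (le_trans le_sup_left le_sup_left) ?_) ?_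
    · refine le_trans ?_ (le_trans (le_sup_right :
        _ ≤ MeasurableSpace.comap (f 0) (borel X) ⊔ _) (le_sup_left : _ ≤ G (j + 1)))
      exact iSup_le fun i => iSup_le fun hi =>
        le_iSup_of_le i (le_iSup_of_le (Finset.mem_Icc.mpr
          ⟨(Finset.mem_Icc.mp hi).1, le_trans (Finset.mem_Icc.mp hi).2 (Nat.le_succ j)⟩) le_rfl)
    · refine le_trans ?_ (le_trans (le_sup_right :
        _ ≤ MeasurableSpace.comap (f 0) (borel X) ⊔ _) (le_sup_left : _ ≤ G (j + 1)))
      refine le_iSup_of_le (j + 1) (le_iSup_of_le (Finset.mem_Icc.mpr ⟨by omega, by omega⟩) ?_)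
      have h1 : (fun ω => f (j + 1) ω - f (j + 1 - 1) ω) = d j := by
        rw [hgen (j + 1) (by omega), Nat.add_sub_cancel]
      rw [h1, hbX, hbR]
      have h2 : (fun ω => ‖f (j + 1) ω - f j ω‖) = (fun x : X => ‖x‖) ∘ d j := rfl
      rw [h2, ← MeasurableSpace.comap_comp]
      exact MeasurableSpace.comap_mono (Measurable.comap_le measurable_norm)
  -- d j strongly measurable wrt G (j+1) was for monotonicity; now measurability claims
  have hnorm_meas : ∀ j, Measurable[G j] fun ω => ‖f (j + 1) ω - f j ω‖ := by
    intro j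
    refine Measurable.of_comap_le (le_trans ?_ (le_sup_right : _ ≤ G j))
    rw [hbR]
  have hd_measG : ∀ j, Measurable[G (j + 1)] (d j) := by
    intro j
    refine Measurable.of_comap_le (le_trans ?_ (hG_mono (le_refl (j + 1))))
    refine le_trans ?_ (le_sup_left : _ ≤ G (j + 1))
    refine le_trans ?_ (le_sup_right : _ ≤ _ ⊔ _)
    refine le_iSup_of_le (j + 1) (le_iSup_of_le (Finset.mem_Icc.mpr ⟨by omega, by omega⟩) ?_)
    rw [hgen (j + 1) (by omega), Nat.add_sub_cancel, hbX]
  -- strong measurability of f j wrt G j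
  have hf_measG : ∀ j, StronglyMeasurable[G j] (f j) := by
    intro j
    induction j with
    | zero => rw [hc0]; exact stronglyMeasurable_const
    | succ k ih =>
      have : f (k + 1) = fun ω => f k ω + d k ω := by
        funext ω; simp [hd_def]
      rw [this]
      exact (ih.mono (hG_mono (Nat.le_succ k))).add
        ((hd_measG k).stronglyMeasurable)
  -- THE KEY LEMMA: the set integral of d j over any G j measurable set vanishes
  have hkey : ∀ j : ℕ, ∀ s : Set Ω, MeasurableSet[G j] s →
      ∫ ω in s, d j ω ∂μ = 0 := by
    intro j s hs
    obtain ⟨B, hB, hBs⟩ := MeasurableSpace.measurableSet_comap.mp (hG_le_comap j s hs)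
    -- the joint variable and the flip
    set D : Ω → (Fin (j + 1) → X) := fun ω i => d i ω with hD_def
    have hD_meas : Measurable D := measurable_pi_lambda _ fun i => hd_meas i
    set flip : (Fin (j + 1) → X) → (Fin (j + 1) → X) :=
      fun x i => if (i : ℕ) = j then -x i else x i with hflip_def
    have hflip_cont : Continuous flip := by
      refine continuous_pi fun i => ?_
      by_cases h : (i : ℕ) = j <;> simp only [hflip_def, h, if_true, if_false]
      · exact (continuous_apply i).neg
      · exact continuous_apply i
    set T : (Fin (j + 1) → X) → (Fin j → X) × ℝ :=
      fun x => (fun i => x i.castSucc, ‖x (Fin.last j)‖) with hT_def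
    have hT_meas : Measurable T :=
      (measurable_pi_lambda _ fun i => measurable_pi_apply _).prodMk
        ((measurable_pi_apply _).norm)
    have hTS : S j = T ∘ D := by
      funext ω
      simp only [hS_def, hT_def, Function.comp_apply, hD_def, Prod.mk.injEq]
      constructor
      · funext i
        congr 1
      · congr 1
    have hTflip : T ∘ flip = T := by
      funext x
      simp only [Function.comp_apply, hT_def, hflip_def, Prod.mk.injEq]
      constructor
      · funext i
        simp only [hflip_def, Fin.coe_castSucc]
        rw [if_neg (Nat.ne_of_lt i.isLt)]
      · simp [hflip_def, Fin.val_last]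
    -- the two laws
    set ν : Measure (Fin (j + 1) → X) := Measure.map D μ with hν_def
    set ν' : Measure (Fin (j + 1) → X) := Measure.map (flip ∘ D) μ with hν'_def
    haveI : IsProbabilityMeasure ν := Measure.isProbabilityMeasure_map hD_meas.aemeasurable
    haveI : IsProbabilityMeasure ν' :=
      Measure.isProbabilityMeasure_map (hflip_cont.measurable.comp hD_meas).aemeasurable
    have hνν' : ν = ν' := by
      refine ext_of_forall_lintegral_eq_of_IsFiniteMeasure fun g => ?_
      -- turn lintegrals into integrals of the real-valued bounded continuous function
      set φ : (Fin (j + 1) → X) → ℝ := fun v => (g v : ℝ) with hφ_def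
      have hφ_cont : Continuous φ := NNReal.continuous_coe.comp g.continuous
      obtain ⟨C, hC⟩ := g.bounded
      have hφ_bdd : ∃ C', ∀ v, |φ v| ≤ C' := by
        refine ⟨(g Classical.ofNonempty : ℝ) + C, fun v => ?_⟩
        rw [abs_of_nonneg (g v).coe_nonneg]
        have := hC v Classical.ofNonempty
        rw [NNReal.dist_eq] at this
        have h2 := abs_le.mp this
        linarith [h2.1, h2.2]
      obtain ⟨C', hC'⟩ := hφ_bdd
      have hint1 : Integrable (fun ω => φ (D ω)) μ := by
        refine Integrable.mono' (integrable_const C')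
          ((hφ_cont.measurable.comp hD_meas).aestronglyMeasurable) ?_
        filter_upwards with ω
        rw [Real.norm_eq_abs]; exact hC' _
      have hint2 : Integrable (fun ω => φ (flip (D ω))) μ := by
        refine Integrable.mono' (integrable_const C')
          ((hφ_cont.measurable.comp (hflip_cont.measurable.comp hD_meas)).aestronglyMeasurable) ?_
        filter_upwards with ω
        rw [Real.norm_eq_abs]; exact hC' _
      have heq : ∫ ω, φ (D ω) ∂μ = ∫ ω, φ (flip (D ω)) ∂μ := by
        exact hsymm j φ hφ_cont ⟨C', hC'⟩
      calc ∫⁻ x, g x ∂ν = ∫⁻ ω, g (D ω) ∂μ :=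
              lintegral_map (g.continuous.measurable.coe_nnreal_ennreal) hD_meas
        _ = ENNReal.ofReal (∫ ω, φ (D ω) ∂μ) := by
              rw [← lintegral_coe_eq_integral _ hint1]
        _ = ENNReal.ofReal (∫ ω, φ (flip (D ω)) ∂μ) := by rw [heq]
        _ = ∫⁻ ω, g (flip (D ω)) ∂μ := by
              rw [← lintegral_coe_eq_integral _ hint2]
        _ = ∫⁻ x, g x ∂ν' :=
              (lintegral_map (g.continuous.measurable.coe_nnreal_ennreal)
                (hflip_cont.measurable.comp hD_meas)).symm
    -- the vector-valued test function
    set g' : (Fin (j + 1) → X) → X :=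
      fun x => Set.indicator B (fun _ => (1 : ℝ)) (T x) • x (Fin.last j) with hg'_def
    have hg'_meas : StronglyMeasurable g' := by
      refine Measurable.stronglyMeasurable ?_
      exact ((measurable_const.indicator hB).comp hT_meas).smul (measurable_pi_apply _)
    have hflipg' : ∀ x, g' (flip x) = -g' x := by
      intro x
      simp only [hg'_def]
      have h1 : T (flip x) = T x := congrFun hTflip x
      rw [h1]
      have h2 : flip x (Fin.last j) = -x (Fin.last j) := by
        simp [hflip_def, Fin.val_last]
      rw [h2, smul_neg]
    have hint : ∫ ω, g' (D ω) ∂μ = 0 := by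
      have h1 : ∫ ω, g' (D ω) ∂μ = ∫ x, g' x ∂ν :=
        (integral_map hD_meas.aemeasurable hg'_meas.aestronglyMeasurable).symm
      have h2 : ∫ x, g' x ∂ν' = ∫ ω, g' (flip (D ω)) ∂μ :=
        integral_map (hflip_cont.measurable.comp hD_meas).aemeasurable
          hg'_meas.aestronglyMeasurable
      have h3 : ∫ ω, g' (flip (D ω)) ∂μ = -∫ ω, g' (D ω) ∂μ := by
        rw [← integral_neg]
        congr 1
        funext ω
        exact hflipg' (D ω)
      have : ∫ ω, g' (D ω) ∂μ = -∫ ω, g' (D ω) ∂μ :=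
        calc ∫ ω, g' (D ω) ∂μ = ∫ x, g' x ∂ν := h1
          _ = ∫ x, g' x ∂ν' := by rw [hνν']
          _ = ∫ ω, g' (flip (D ω)) ∂μ := h2
          _ = -∫ ω, g' (D ω) ∂μ := h3
      have h4 : ∫ ω, g' (D ω) ∂μ + ∫ ω, g' (D ω) ∂μ = 0 := by
        nth_rewrite 2 [this]
        exact add_neg_cancel _
      have h5 : (2 : ℝ) • ∫ ω, g' (D ω) ∂μ = 0 := by
        rw [two_smul]; exact h4
      exact (smul_eq_zero.mp h5).resolve_left (by norm_num)
    -- now rewrite the set integral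
    have hs_m : MeasurableSet s := hG_le j s hs
    rw [← integral_indicator hs_m]
    rw [← hint]
    congr 1
    funext ω
    have hmem : ω ∈ s ↔ T (D ω) ∈ B := by
      rw [← hBs, Set.mem_preimage, hTS]; rfl
    by_cases hω : ω ∈ s
    · rw [Set.indicator_of_mem hω]
      simp only [hg'_def]
      rw [Set.indicator_of_mem (hmem.mp hω), one_smul]
      simp [hD_def, Fin.val_last]
    · rw [Set.indicator_of_notMem hω]
      simp only [hg'_def]
      rw [Set.indicator_of_notMem (fun h => hω (hmem.mpr h)), zero_smul]
  -- set integrals of f agree across time on G i sets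
  have hset : ∀ i j : ℕ, i ≤ j → ∀ s : Set Ω, MeasurableSet[G i] s →
      ∫ ω in s, f i ω ∂μ = ∫ ω in s, f j ω ∂μ := by
    intro i j hij s hs
    induction j with
    | zero => obtain rfl : i = 0 := Nat.le_zero.mp hij; rfl
    | succ k ih =>
      rcases Nat.lt_or_ge i (k + 1) with h | h
      · have hik : i ≤ k := Nat.lt_succ_iff.mp h
        rw [ih hik]
        have hsk : MeasurableSet[G k] s := (hG_mono hik) s hs
        have h1 : ∫ ω in s, f (k + 1) ω ∂μ = ∫ ω in s, (f k ω + d k ω) ∂μ := by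
          congr 1
          funext ω; simp [hd_def]
        have hik1 : IntegrableOn (fun ω => f k ω) s μ := (hf.integrable k).integrableOn
        have hdk : IntegrableOn (fun ω => d k ω) s μ :=
          ((hf.integrable (k + 1)).sub (hf.integrable k)).integrableOn
        rw [h1, integral_add hik1 hdk, hkey k s hsk, add_zero]
      · obtain rfl : i = k + 1 := le_antisymm hij h
        rfl
  -- conditional expectations
  haveI : ∀ i, SigmaFinite (μ.trim (hG_le i)) := fun i => by
    have : IsFiniteMeasure (μ.trim (hG_le i)) := isFiniteMeasure_trim _
    infer_instance
  have hcond : ∀ i j : ℕ, i ≤ j → μ[f j | G i] =ᵐ[μ] f i := by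
    intro i j hij
    refine (ae_eq_condExp_of_forall_setIntegral_eq (hG_le i) (hf.integrable j)
      (fun s _ _ => (hf.integrable i).integrableOn)
      (fun s hs _ => hset i j hij s hs)
      ((hf_measG i).aestronglyMeasurable)).symm
  refine ⟨⟨G, hG_mono, hG_le⟩, fun j => rfl, ⟨hf_measG, hcond⟩, hf_measG,
    fun j => hcond j (j + 1) (Nat.le_succ j), hnorm_meas⟩
end
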